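/- arXiv:1604.05787 — 5 statements merged into one kernel-verified Lean document; each statement's English description precedes it below -/
import Mathlib

section
/- Let g : ℝ^d → ℂ be a function such that for some fixed coordinate index j the first and second partial derivatives ∂g/∂t_j and ∂²g/∂t_j² exist everywhere. Assume |g(t)| ≤ a·‖t‖^{-p} and |∂²g/∂t_j²(t)| ≤ b for some constants a, b > 0, p ≥ 0, and all t ≠ 0. Then |∂g/∂t_j(t)| ≤ 2√(ab)·‖t‖^{-p/2} for all t ≠ 0. -/
open Set

/-- Second-order Taylor bound. -/
lemma taylor2_bound {φ φ1 φ2 : ℝ → ℂ} {H b : ℝ} (hH : 0 ≤ H) (hb : 0 ≤ b)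
    (h1 : ∀ u, HasDerivAt φ (φ1 u) u)
    (h2 : ∀ u, HasDerivAt φ1 (φ2 u) u)
    (hbd : ∀ u ∈ Icc 0 H, ‖φ2 u‖ ≤ b) :
    ‖φ H - φ 0 - H • φ1 0‖ ≤ b / 2 * H ^ 2 := by
  have step1 : ∀ u ∈ Icc (0:ℝ) H, ‖φ1 u - φ1 0‖ ≤ b * (u - 0) :=
    norm_image_sub_le_of_norm_deriv_le_segment'
      (fun x hx => (h2 x).hasDerivWithinAt) (fun x hx => hbd x (Ico_subset_Icc_self hx))
  set f : ℝ → ℂ := fun s => φ s - φ 0 - s • φ1 0 with hf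
  have hf' : ∀ s : ℝ, HasDerivAt f (φ1 s - φ1 0) s := by
    intro s
    have hsm : HasDerivAt (fun s : ℝ => s • φ1 0) (φ1 0) s := by
      simpa using (hasDerivAt_id s).smul_const (φ1 0)
    exact ((h1 s).sub_const (φ 0)).sub hsm
  have hB : ∀ x : ℝ, HasDerivAt (fun s : ℝ => b / 2 * s ^ 2) (b * x) x := by
    intro x
    have h := (hasDerivAt_pow 2 x).const_mul (b / 2)
    refine h.congr_deriv ?_
    ring
  have key := image_norm_le_of_norm_deriv_right_le_deriv_boundary
    (f := f) (f' := fun s => φ1 s - φ1 0) (a := 0) (b := H)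
    (fun x _ => (hf' x).continuousAt.continuousWithinAt)
    (fun x _ => (hf' x).hasDerivWithinAt.mono (fun y hy => trivial))
    (by simp [hf]) hB
    (fun x hx => by simpa using step1 x (Ico_subset_Icc_self hx))
  have h := key (right_mem_Icc.2 hH)
  simpa [hf] using h

/-- Calculus lemma (Fill–Janson style): if `g : ℝ^d → ℂ` has first and second partial
derivatives in the `j`-th coordinate direction everywhere, `|g(t)| ≤ a‖t‖^(-p)` and
`|∂²g/∂t_j²(t)| ≤ b` for all `t ≠ 0`, then `|∂g/∂t_j(t)| ≤ 2√(ab)‖t‖^(-p/2)` for `t ≠ 0`. -/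
theorem partial_deriv_bound_of_decay
    {d : ℕ} (g g1 g2 : EuclideanSpace ℝ (Fin d) → ℂ) (j : Fin d)
    (hg1 : ∀ t, HasLineDerivAt ℝ g (g1 t) t (EuclideanSpace.single j 1))
    (hg2 : ∀ t, HasLineDerivAt ℝ g1 (g2 t) t (EuclideanSpace.single j 1))
    (a b : ℝ) (ha : 0 < a) (hb : 0 < b) (p : ℝ) (hp : 0 ≤ p)
    (hgbd : ∀ t, t ≠ 0 → ‖g t‖ ≤ a * ‖t‖ ^ (-p))
    (hg2bd : ∀ t, t ≠ 0 → ‖g2 t‖ ≤ b) :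
    ∀ t, t ≠ 0 → ‖g1 t‖ ≤ 2 * Real.sqrt (a * b) * ‖t‖ ^ (-p / 2) := by
  intro t ht
  set v : EuclideanSpace ℝ (Fin d) := EuclideanSpace.single j 1 with hv
  have hr : (0:ℝ) < ‖t‖ := norm_pos_iff.2 ht
  set ε : ℝ := if 0 ≤ t j then 1 else -1 with hε
  have hε2 : ε * ε = 1 := by by_cases h : 0 ≤ t j <;> simp [hε, h]
  have hεabs : |ε| = 1 := by by_cases h : 0 ≤ t j <;> simp [hε, h]
  have hεt : 0 ≤ ε * t j := by
    by_cases h : 0 ≤ t j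
    · simp only [hε, h, if_true]; linarith
    · simp only [hε, h, if_false]; push_neg at h; nlinarith
  set c : ℝ → EuclideanSpace ℝ (Fin d) := fun u => t + (ε * u) • v with hc
  have hnorm : ∀ u : ℝ, 0 ≤ u → ‖t‖ ≤ ‖c u‖ := by
    intro u hu
    have hinner : (inner ℝ t v : ℝ) = t j := by
      have h := EuclideanSpace.inner_single_right (𝕜 := ℝ) j 1 t
      simpa [hv] using h
    have hsq : ‖c u‖ ^ 2 = ‖t‖ ^ 2 + 2 * ((ε * u) * t j) + (ε * u) ^ 2 := by
      have h1 : ‖c u‖ ^ 2 = ‖t‖ ^ 2 + 2 * (inner ℝ t ((ε * u) • v) : ℝ) + ‖(ε * u) • v‖ ^ 2 :=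
        norm_add_sq_real t ((ε * u) • v)
      have h2 : (inner ℝ t ((ε * u) • v) : ℝ) = (ε * u) * t j := by
        rw [real_inner_smul_right, hinner]
      have h3 : ‖(ε * u) • v‖ = |ε * u| := by
        simp [norm_smul, hv, abs_mul, Real.norm_eq_abs]
      rw [h1, h2, h3, sq_abs]
    have hle : ‖t‖ ^ 2 ≤ ‖c u‖ ^ 2 := by
      rw [hsq]
      nlinarith [mul_nonneg hu hεt, sq_nonneg (ε * u)]
    have h := Real.sqrt_le_sqrt hle
    rwa [Real.sqrt_sq (norm_nonneg _), Real.sqrt_sq (norm_nonneg _)] at h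
  have hc0 : ∀ u : ℝ, 0 ≤ u → c u ≠ 0 := by
    intro u hu h0
    have h := hnorm u hu
    rw [h0, norm_zero] at h
    exact absurd h (not_le.2 hr)
  set φ : ℝ → ℂ := fun u => g (c u) with hφ
  set φ1 : ℝ → ℂ := fun u => ε • g1 (c u) with hφ1
  set φ2 : ℝ → ℂ := fun u => g2 (c u) with hφ2
  have hshift : ∀ u x : ℝ, c u + (ε * (x - u)) • v = c x := by
    intro u x
    simp only [hc]
    module
  have hi : ∀ u : ℝ, HasDerivAt (fun x : ℝ => ε * (x - u)) ε u := by
    intro u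
    simpa using ((hasDerivAt_id u).sub_const u).const_mul ε
  have hd1 : ∀ u : ℝ, HasDerivAt φ (φ1 u) u := by
    intro u
    have hL : HasDerivAt (fun s : ℝ => g (c u + s • v)) (g1 (c u)) (ε * (u - u)) := by
      have h0 : ε * (u - u) = 0 := by ring
      rw [h0]
      exact hg1 (c u)
    have h := hL.scomp u (hi u)
    have heq : ((fun s : ℝ => g (c u + s • v)) ∘ fun x : ℝ => ε * (x - u)) = φ := by
      funext x
      simp only [Function.comp_apply, hφ]
      rw [hshift]
    rw [heq] at h
    simpa [hφ1] using h
  have hd2 : ∀ u : ℝ, HasDerivAt φ1 (φ2 u) u := by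
    intro u
    have hL : HasDerivAt (fun s : ℝ => g1 (c u + s • v)) (g2 (c u)) (ε * (u - u)) := by
      have h0 : ε * (u - u) = 0 := by ring
      rw [h0]
      exact hg2 (c u)
    have h := (hL.scomp u (hi u)).const_smul ε
    have heq : (fun x : ℝ => ε • ((fun s : ℝ => g1 (c u + s • v)) ∘ fun x : ℝ => ε * (x - u)) x) = φ1 := by
      funext x
      simp only [Function.comp_apply, hφ1]
      rw [hshift]
    rw [show (ε • (fun s : ℝ => g1 (c u + s • v)) ∘ fun x : ℝ => ε * (x - u)) = φ1 from heq] at h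
    have hder : ε • ε • g2 (c u) = φ2 u := by
      rw [smul_smul, hε2, one_smul, hφ2]
    rwa [hder] at h
  -- set up constants
  set A : ℝ := a * ‖t‖ ^ (-p) with hA
  have hA0 : 0 < A := mul_pos ha (Real.rpow_pos_of_pos hr _)
  set S1 : ℝ := Real.sqrt (A / b) with hS1
  set S2 : ℝ := Real.sqrt (A * b) with hS2
  have hS1pos : 0 < S1 := Real.sqrt_pos.2 (div_pos hA0 hb)
  have hS2pos : 0 < S2 := Real.sqrt_pos.2 (mul_pos hA0 hb)
  have hS1sq : S1 ^ 2 = A / b := Real.sq_sqrt (le_of_lt (div_pos hA0 hb))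
  have hS1S2 : S1 * S2 = A := by
    rw [hS1, hS2, ← Real.sqrt_mul (le_of_lt (div_pos hA0 hb))]
    have : A / b * (A * b) = A ^ 2 := by field_simp
    rw [this, Real.sqrt_sq hA0.le]
  set H : ℝ := 2 * S1 with hH
  have hHpos : 0 < H := by positivity
  -- bounds
  have hφbd : ∀ u : ℝ, 0 ≤ u → ‖φ u‖ ≤ A := by
    intro u hu
    refine (hgbd (c u) (hc0 u hu)).trans ?_
    rw [hA]
    exact mul_le_mul_of_nonneg_left
      (Real.rpow_le_rpow_of_nonpos hr (hnorm u hu) (neg_nonpos.2 hp)) ha.le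
  have hφ2bd : ∀ u ∈ Icc (0:ℝ) H, ‖φ2 u‖ ≤ b := fun u hu => hg2bd (c u) (hc0 u hu.1)
  -- Taylor
  have htay := taylor2_bound hHpos.le hb.le hd1 hd2 hφ2bd
  have hn1 : ‖φ1 0‖ = ‖g1 t‖ := by
    have hc00 : c 0 = t := by simp [hc]
    rw [hφ1]
    simp only [hc00]
    rw [norm_smul, Real.norm_eq_abs, hεabs, one_mul]
  have hmain : H * ‖g1 t‖ ≤ b / 2 * H ^ 2 + 2 * A := by
    have h1 : ‖H • φ1 0‖ ≤ ‖φ H - φ 0 - H • φ1 0‖ + ‖φ H‖ + ‖φ 0‖ := by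
      calc ‖H • φ1 0‖ = ‖(φ H - φ 0) - (φ H - φ 0 - H • φ1 0)‖ := by congr 1; module
        _ ≤ ‖φ H - φ 0‖ + ‖φ H - φ 0 - H • φ1 0‖ := norm_sub_le _ _
        _ ≤ (‖φ H‖ + ‖φ 0‖) + ‖φ H - φ 0 - H • φ1 0‖ := by
            have := norm_sub_le (φ H) (φ 0); linarith
        _ = ‖φ H - φ 0 - H • φ1 0‖ + ‖φ H‖ + ‖φ 0‖ := by ring
    have h2 : ‖H • φ1 0‖ = H * ‖g1 t‖ := by
      rw [norm_smul, Real.norm_eq_abs, abs_of_pos hHpos, hn1]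
    rw [h2] at h1
    have := hφbd H hHpos.le
    have := hφbd 0 le_rfl
    linarith [htay]
  -- arithmetic finish
  have hrw : 2 * Real.sqrt (a * b) * ‖t‖ ^ (-p / 2) = 2 * S2 := by
    rw [hS2, hA]
    rw [show (-p / 2) = -p * (1 / 2) by ring, Real.rpow_mul hr.le, ← Real.sqrt_eq_rpow,
      mul_assoc, ← Real.sqrt_mul (mul_nonneg ha.le hb.le)]
    congr 2
    ring
  rw [hrw]
  have hcalc : b / 2 * H ^ 2 + 2 * A = 2 * S2 * H := by
    have h1 : b / 2 * H ^ 2 = 2 * A := by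
      rw [hH, show (2 * S1) ^ 2 = 4 * S1 ^ 2 by ring, hS1sq]
      field_simp
      ring
    have h2 : 2 * S2 * H = 4 * A := by
      rw [hH, show 2 * S2 * (2 * S1) = 4 * (S1 * S2) by ring, hS1S2]
    linarith
  rw [hcalc] at hmain
  calc ‖g1 t‖ = H * ‖g1 t‖ / H := by field_simp
    _ ≤ 2 * S2 * H / H := by gcongr
    _ = 2 * S2 := by field_simp
end

section
/- Let X be an ℝ^d-valued random variable whose support is in general position, i.e., there exist x_0, …, x_d in the support of X such that x_1 − x_0, …, x_d − x_0 are linearly independent. Then there exists ε > 0 such that the characteristic function φ of X satisfies |φ(t)| < 1 for all t with 0 < ‖t‖ ≤ ε. -/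
open MeasureTheory
open scoped RealInnerProductSpace

lemma norm_exp_mul_I_sub_le' (a b : ℝ) :
    ‖Complex.exp (a * Complex.I) - Complex.exp (b * Complex.I)‖ ≤ |a - b| := by
  have hd : ∀ θ : ℝ, HasDerivAt (fun θ : ℝ => Complex.exp (θ * Complex.I))
      (Complex.exp (θ * Complex.I) * Complex.I) θ := by
    intro θ
    have h1 : HasDerivAt (fun z : ℂ => Complex.exp (z * Complex.I))
        (Complex.exp ((θ : ℂ) * Complex.I) * Complex.I) (θ : ℂ) := by
      simpa using ((hasDerivAt_id (θ : ℂ)).mul_const Complex.I).cexp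
    simpa using h1.comp_ofReal
  have := Convex.norm_image_sub_le_of_norm_hasDerivWithin_le
    (f := fun θ : ℝ => Complex.exp (θ * Complex.I))
    (f' := fun θ : ℝ => Complex.exp (θ * Complex.I) * Complex.I) (C := 1) (s := Set.univ)
    (fun x _ => (hd x).hasDerivWithinAt)
    (fun x _ => by simp [Complex.norm_exp_ofReal_mul_I])
    convex_univ (Set.mem_univ b) (Set.mem_univ a)
  simpa [Real.norm_eq_abs] using this

/-- `x` belongs to the support of (the distribution of) `X`. -/
def MemSupp {Ω : Type*} [MeasurableSpace Ω] (μ : Measure Ω) {d : ℕ}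
    (X : Ω → EuclideanSpace ℝ (Fin d)) (x : EuclideanSpace ℝ (Fin d)) : Prop :=
  ∀ ε : ℝ, 0 < ε → 0 < μ {ω | ‖X ω - x‖ < ε}

/-- If the support of an `ℝ^d`-valued random variable `X` is in general position
(it contains points `x_0, …, x_d` with `x_1 − x_0, …, x_d − x_0` linearly independent),
then there is `ε > 0` such that the characteristic function `φ` of `X` satisfies
`|φ(t)| < 1` for all `t` with `0 < ‖t‖ ≤ ε`. -/
theorem charFun_lt_one_near_zero_of_general_position
    {Ω : Type*} [MeasurableSpace Ω] (μ : Measure Ω) [IsProbabilityMeasure μ]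
    {d : ℕ} (X : Ω → EuclideanSpace ℝ (Fin d)) (hX : Measurable X)
    (hgp : ∃ x : Fin (d + 1) → EuclideanSpace ℝ (Fin d),
      (∀ i, MemSupp μ X (x i)) ∧
      LinearIndependent ℝ (fun i : Fin d => x i.succ - x 0)) :
    ∃ ε : ℝ, 0 < ε ∧ ∀ t : EuclideanSpace ℝ (Fin d), 0 < ‖t‖ → ‖t‖ ≤ ε →
      ‖∫ ω, Complex.exp ((⟪t, X ω⟫ : ℝ) * Complex.I) ∂μ‖ < 1 := by
  obtain ⟨x, hsupp, hli⟩ := hgp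
  set M : ℝ := ∑ j : Fin d, ‖x j.succ - x 0‖ with hM
  have hM0 : 0 ≤ M := Finset.sum_nonneg fun _ _ => norm_nonneg _
  have hMle : ∀ j : Fin d, ‖x j.succ - x 0‖ ≤ M := fun j =>
    Finset.single_le_sum (f := fun j : Fin d => ‖x j.succ - x 0‖)
      (fun _ _ => norm_nonneg _) (Finset.mem_univ j)
  refine ⟨Real.pi / (M + 1), div_pos Real.pi_pos (by linarith), ?_⟩
  intro t ht hte
  set f : Ω → ℂ := fun ω => Complex.exp ((⟪t, X ω⟫ : ℝ) * Complex.I) with hf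
  have h_le : ∀ᵐ ω ∂μ, ‖f ω‖ ≤ 1 :=
    Filter.Eventually.of_forall fun ω => le_of_eq (Complex.norm_exp_ofReal_mul_I _)
  rcases ae_eq_const_or_norm_integral_lt_of_norm_le_const h_le with h | h
  swap
  · simpa using h
  exfalso
  set c : ℂ := ⨍ ω, f ω ∂μ with hc
  -- every support point y satisfies exp(⟪t,y⟫ I) = c
  have key : ∀ y : EuclideanSpace ℝ (Fin d), MemSupp μ X y →
      Complex.exp ((⟪t, y⟫ : ℝ) * Complex.I) = c := by
    intro y hy
    have hnorm : ∀ δ : ℝ, 0 < δ →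
        ‖Complex.exp ((⟪t, y⟫ : ℝ) * Complex.I) - c‖ ≤ ‖t‖ * δ := by
      intro δ hδ
      have hpos := hy δ hδ
      have hex : ∃ ω, ‖X ω - y‖ < δ ∧ f ω = c := by
        by_contra hcon
        push_neg at hcon
        have hsub : {ω | ‖X ω - y‖ < δ} ⊆ {ω | ¬ f ω = c} := fun ω hω => hcon ω hω
        have : μ {ω | ‖X ω - y‖ < δ} = 0 :=
          measure_mono_null hsub (ae_iff.mp h)
        exact absurd this hpos.ne'
      obtain ⟨ω, hω1, hω2⟩ := hex
      calc ‖Complex.exp ((⟪t, y⟫ : ℝ) * Complex.I) - c‖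
          = ‖Complex.exp ((⟪t, y⟫ : ℝ) * Complex.I)
              - Complex.exp ((⟪t, X ω⟫ : ℝ) * Complex.I)‖ := by rw [← hω2]
        _ ≤ |⟪t, y⟫ - ⟪t, X ω⟫| := norm_exp_mul_I_sub_le' _ _
        _ = |⟪t, y - X ω⟫| := by rw [inner_sub_right]
        _ ≤ ‖t‖ * ‖y - X ω‖ := abs_real_inner_le_norm _ _
        _ ≤ ‖t‖ * δ := by
            have := (norm_sub_rev (X ω) y) ▸ hω1.le
            exact mul_le_mul_of_nonneg_left this (norm_nonneg t)
    have hle0 : ‖Complex.exp ((⟪t, y⟫ : ℝ) * Complex.I) - c‖ ≤ 0 := by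
      refine le_of_forall_pos_le_add fun ε hε => ?_
      have := hnorm (ε / ‖t‖) (div_pos hε ht)
      rw [mul_div_cancel₀ _ ht.ne'] at this
      linarith
    have := le_antisymm hle0 (norm_nonneg _)
    rwa [norm_eq_zero, sub_eq_zero] at this
  -- hence inner products with the basis vectors are multiples of 2π, and small, so zero
  have hzero : ∀ j : Fin d, ⟪t, x j.succ - x 0⟫ = 0 := by
    intro j
    have e1 := key (x j.succ) (hsupp j.succ)
    have e0 := key (x 0) (hsupp 0)
    have hne : Complex.exp ((⟪t, x 0⟫ : ℝ) * Complex.I) ≠ 0 := Complex.exp_ne_zero _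
    have hone : Complex.exp ((⟪t, x j.succ - x 0⟫ : ℝ) * Complex.I) = 1 := by
      have : ((⟪t, x j.succ - x 0⟫ : ℝ) : ℂ) * Complex.I
          = (⟪t, x j.succ⟫ : ℝ) * Complex.I - (⟪t, x 0⟫ : ℝ) * Complex.I := by
        rw [inner_sub_right]; push_cast; ring
      rw [this, Complex.exp_sub, e1, e0, div_self (e0 ▸ hne)]
    obtain ⟨n, hn⟩ := Complex.exp_eq_one_iff.mp hone
    have him : ⟪t, x j.succ - x 0⟫ = n * (2 * Real.pi) := by
      have := congrArg Complex.im hn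
      simpa using this
    have hbound : |⟪t, x j.succ - x 0⟫| < 2 * Real.pi := by
      have h1 : |⟪t, x j.succ - x 0⟫| ≤ ‖t‖ * ‖x j.succ - x 0‖ := abs_real_inner_le_norm _ _
      have h2 : ‖t‖ * (M + 1) ≤ Real.pi := (le_div_iff₀ (by linarith)).mp hte
      have h3 : ‖x j.succ - x 0‖ ≤ M := hMle j
      nlinarith [Real.pi_pos, norm_nonneg (x j.succ - x 0)]
    have hn0 : n = 0 := by
      by_contra hcon
      have h1 : (1 : ℝ) ≤ |(n : ℝ)| := by
        have := Int.one_le_abs hcon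
        calc (1:ℝ) = ((1:ℤ):ℝ) := by norm_num
          _ ≤ ((|n| : ℤ) : ℝ) := by exact_mod_cast this
          _ = |(n : ℝ)| := by push_cast [Int.cast_abs]; ring
      rw [him, abs_mul, abs_of_pos (by positivity : (0:ℝ) < 2 * Real.pi)] at hbound
      nlinarith [Real.pi_pos]
    rw [him, hn0]; simp
  -- so t is orthogonal to a basis, hence zero
  rcases Nat.eq_zero_or_pos d with hd | hd
  · subst hd
    have : t = 0 := Subsingleton.elim t 0
    rw [this] at ht
    simp at ht
  have : Nonempty (Fin d) := ⟨⟨0, hd⟩⟩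
  have hcard : Fintype.card (Fin d) = Module.finrank ℝ (EuclideanSpace ℝ (Fin d)) := by
    simp
  let b := basisOfLinearIndependentOfCardEqFinrank hli hcard
  have hbj : ∀ j, b j = x j.succ - x 0 := fun j =>
    congrFun (coe_basisOfLinearIndependentOfCardEqFinrank hli hcard) j
  have ht0 : t = 0 := by
    have hrepr := b.sum_repr t
    have : ⟪t, t⟫ = 0 := by
      nth_rewrite 2 [← hrepr]
      rw [inner_sum]
      refine Finset.sum_eq_zero fun i _ => ?_
      rw [real_inner_smul_right, hbj i, hzero i, mul_zero]
    exact inner_self_eq_zero.mp this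
  rw [ht0] at ht
  simp at ht
end

section
/- Suppose X is an ℝ^d-valued random variable with characteristic function φ, and suppose X satisfies the distributional equation X =_d Σ_{j=1}^∞ A_j X^{(j)} + b, where X^{(1)}, X^{(2)}, … and ((A_j)_{j≥1}, b) are independent, each X^{(j)} is distributed as some random vector with characteristic function φ_j, the A_j are random d×d matrices, b is a random vector in ℝ^d, and the series converges almost surely. Then |φ(t)| ≤ E[∏_{j=1}^∞ |φ_j(A_j^T t)|] for all t ∈ ℝ^d. -/
open MeasureTheory ProbabilityTheory Matrix Filter
open scoped RealInnerProductSpace Topology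

/-- View a plain vector as an element of Euclidean space. -/
noncomputable def toEuc {d : ℕ} (v : Fin d → ℝ) : EuclideanSpace ℝ (Fin d) :=
  (WithLp.equiv 2 (Fin d → ℝ)).symm v

/-- View an element of Euclidean space as a plain vector. -/
noncomputable def ofEuc {d : ℕ} (v : EuclideanSpace ℝ (Fin d)) : Fin d → ℝ :=
  WithLp.equiv 2 (Fin d → ℝ) v

section Aux

variable {d : ℕ}

lemma continuous_toEuc : Continuous (toEuc (d := d)) := PiLp.continuous_toLp 2 _

lemma continuous_ofEuc : Continuous (ofEuc (d := d)) := PiLp.continuous_ofLp 2 _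

lemma inner_transpose (m : Matrix (Fin d) (Fin d) ℝ) (t s : EuclideanSpace ℝ (Fin d)) :
    (⟪t, toEuc (m *ᵥ ofEuc s)⟫ : ℝ) = ⟪toEuc (mᵀ *ᵥ ofEuc t), s⟫ := by
  simp only [toEuc, ofEuc, PiLp.inner_apply, RCLike.inner_apply, conj_trivial,
    WithLp.equiv_symm_apply, WithLp.equiv_apply]
  have : ∀ (v w : Fin d → ℝ), ∑ i, v i * w i = v ⬝ᵥ w := fun v w => rfl
  rw [this, this, Matrix.dotProduct_mulVec, Matrix.vecMul_transpose]

lemma indepFun_integral_mul {Ω : Type*} [MeasurableSpace Ω] {μ : Measure Ω}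
    [IsProbabilityMeasure μ] {U V : Ω → ℂ} (h : IndepFun U V μ)
    (hU : AEMeasurable U μ) (hV : AEMeasurable V μ) :
    ∫ ω, U ω * V ω ∂μ = (∫ ω, U ω ∂μ) * ∫ ω, V ω ∂μ := by
  rw [indepFun_iff_map_prod_eq_prod_map_map hU hV] at h
  have : IsProbabilityMeasure (μ.map U) := Measure.isProbabilityMeasure_map hU
  have : IsProbabilityMeasure (μ.map V) := Measure.isProbabilityMeasure_map hV
  have h1 : ∫ ω, U ω * V ω ∂μ = ∫ z : ℂ × ℂ, z.1 * z.2 ∂(μ.map fun ω => (U ω, V ω)) :=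
    (integral_map (hU.prodMk hV) (continuous_fst.mul continuous_snd).aestronglyMeasurable).symm
  rw [h1, h, integral_prod_mul (fun z : ℂ => z) (fun z : ℂ => z)]
  congr 1
  · exact integral_map hU aestronglyMeasurable_id
  · exact integral_map hV aestronglyMeasurable_id

lemma iIndep_integral_prod {Ω E' : Type*} [MeasurableSpace Ω] {μ : Measure Ω}
    [IsProbabilityMeasure μ] [MeasurableSpace E'] {Xc : ℕ → Ω → E'}
    (hiid : iIndepFun Xc μ) (hXcm : ∀ j, Measurable (Xc j))
    (f : ℕ → E' → ℂ) (hf : ∀ j, Measurable (f j)) (n : ℕ) :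
    ∫ ω, ∏ j ∈ Finset.range n, f j (Xc j ω) ∂μ
      = ∏ j ∈ Finset.range n, ∫ ω, f j (Xc j ω) ∂μ := by
  induction n with
  | zero => simp
  | succ n ih =>
    have hg : iIndepFun (fun j ω => f j (Xc j ω)) μ :=
      hiid.comp f hf
    have hgm : ∀ j, Measurable fun ω => f j (Xc j ω) := fun j => (hf j).comp (hXcm j)
    have hind := hg.indepFun_prod_range_succ hgm n
    have heq : (∏ j ∈ Finset.range n, fun ω => f j (Xc j ω))
        = fun ω => ∏ j ∈ Finset.range n, f j (Xc j ω) := by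
      funext ω; simp [Finset.prod_apply]
    rw [heq] at hind
    have hmul := indepFun_integral_mul hind
      ((Finset.measurable_prod _ fun j _ => hgm j).aemeasurable) (hgm n).aemeasurable
    simp only [Finset.prod_range_succ]
    rw [← ih]
    exact hmul

lemma tendsto_prod_of_le_one {f : ℕ → ℝ} (h0 : ∀ j, 0 ≤ f j) (h1 : ∀ j, f j ≤ 1) :
    Tendsto (fun n => ∏ j ∈ Finset.range n, f j) atTop (𝓝 (∏' j, f j)) := by
  have hanti : Antitone fun s : Finset ℕ => ∏ j ∈ s, f j := fun s u hsu => by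
    dsimp only
    rw [← Finset.prod_sdiff hsu]
    exact mul_le_of_le_one_left (Finset.prod_nonneg fun j _ => h0 j)
      (Finset.prod_le_one (fun j _ => h0 j) fun j _ => h1 j)
  have hbdd : BddBelow (Set.range fun s : Finset ℕ => ∏ j ∈ s, f j) := by
    refine ⟨0, ?_⟩
    rintro x ⟨s, rfl⟩
    exact Finset.prod_nonneg fun j _ => h0 j
  have hp : HasProd f (⨅ s : Finset ℕ, ∏ j ∈ s, f j) := tendsto_atTop_ciInf hanti hbdd
  rw [hp.tprod_eq]
  exact hp.tendsto_prod_nat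

lemma continuous_mulVec_pair :
    Continuous fun p : (Fin d → Fin d → ℝ) × EuclideanSpace ℝ (Fin d) =>
      toEuc (Matrix.of p.1 *ᵥ ofEuc p.2) := by
  refine continuous_toEuc.comp ?_
  refine continuous_pi fun i => ?_
  simp only [Matrix.mulVec, dotProduct, Matrix.of_apply]
  exact continuous_finset_sum _ fun k _ =>
    ((continuous_apply k).comp ((continuous_apply i).comp continuous_fst)).mul
      ((continuous_apply k).comp (continuous_ofEuc.comp continuous_snd))

lemma continuous_expInner (c : EuclideanSpace ℝ (Fin d)) :
    Continuous fun v : EuclideanSpace ℝ (Fin d) =>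
      Complex.exp ((⟪c, v⟫ : ℝ) * Complex.I) :=
  Complex.continuous_exp.comp ((Complex.continuous_ofReal.comp
    (Continuous.inner continuous_const continuous_id)).mul continuous_const)

lemma continuous_transMulVec (t : EuclideanSpace ℝ (Fin d)) :
    Continuous fun m : Fin d → Fin d → ℝ => toEuc ((Matrix.of m)ᵀ *ᵥ ofEuc t) := by
  have : (fun m : Fin d → Fin d → ℝ => toEuc ((Matrix.of m)ᵀ *ᵥ ofEuc t))
      = (fun p : (Fin d → Fin d → ℝ) × EuclideanSpace ℝ (Fin d) =>
          toEuc (Matrix.of p.1 *ᵥ ofEuc p.2)) ∘ (fun m => ((fun i k => m k i), t)) := rfl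
  rw [this]
  exact continuous_mulVec_pair.comp
    ((continuous_pi fun i => continuous_pi fun k =>
      (continuous_apply i).comp (continuous_apply k)).prodMk continuous_const)

lemma continuous_phi {Ω : Type*} [MeasurableSpace Ω] (μ : Measure Ω) [IsProbabilityMeasure μ]
    (V : Ω → EuclideanSpace ℝ (Fin d)) (hV : Measurable V) (t : EuclideanSpace ℝ (Fin d)) :
    Continuous fun m : Fin d → Fin d → ℝ =>
      ∫ ω, Complex.exp ((⟪toEuc ((Matrix.of m)ᵀ *ᵥ ofEuc t), V ω⟫ : ℝ) * Complex.I) ∂μ := by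
  refine continuous_of_dominated (fun m => ?_) (fun m => ?_) (integrable_const (1:ℝ)) ?_
  · exact ((continuous_expInner _).measurable.comp hV).aestronglyMeasurable
  · exact Eventually.of_forall fun ω => le_of_eq (Complex.norm_exp_ofReal_mul_I _)
  · refine Eventually.of_forall fun ω => ?_
    exact Complex.continuous_exp.comp ((Complex.continuous_ofReal.comp
      (Continuous.inner (continuous_transMulVec t) continuous_const)).mul continuous_const)

/-- The product sigma-algebra on the big product space is generated by open sets. -/
instance bigProd_opensMeasurable (d : ℕ) :
    OpensMeasurableSpace (((ℕ → Fin d → Fin d → ℝ) × EuclideanSpace ℝ (Fin d))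
      × (ℕ → EuclideanSpace ℝ (Fin d))) :=
  @Prod.opensMeasurableSpace _ _ _ _ _ _ _ _ (secondCountableTopologyEither_of_left _ _)

end Aux

/-- If `X =_d Σ_{j} A_j X^{(j)} + b` with `(X^{(j)})_j` independent of each other and of
`((A_j)_j, b)`, and the series converges a.s., then the characteristic function `φ` of `X`
satisfies `|φ(t)| ≤ E[∏_j |φ_j(A_jᵀ t)|]`, where `φ_j` is the characteristic function of
`X^{(j)}`. -/
theorem charFun_recursion_bound
    {Ω : Type*} [MeasurableSpace Ω] (μ : Measure Ω) [IsProbabilityMeasure μ]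
    {d : ℕ} (X : Ω → EuclideanSpace ℝ (Fin d))
    (Xc : ℕ → Ω → EuclideanSpace ℝ (Fin d))
    (A : ℕ → Ω → Matrix (Fin d) (Fin d) ℝ)
    (b : Ω → EuclideanSpace ℝ (Fin d))
    (hXm : Measurable X) (hXcm : ∀ j, Measurable (Xc j))
    (hAm : ∀ j, Measurable fun ω => Matrix.of.symm (A j ω))
    (hbm : Measurable b)
    (hiid : iIndepFun Xc μ)
    (hindep : IndepFun (fun ω => ((fun j => Matrix.of.symm (A j ω)), b ω))
      (fun ω (j : ℕ) => Xc j ω) μ)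
    (hsum : ∀ᵐ ω ∂μ, Summable fun j => toEuc (A j ω *ᵥ ofEuc (Xc j ω)))
    (hlaw : μ.map X =
      μ.map (fun ω => (∑' j, toEuc (A j ω *ᵥ ofEuc (Xc j ω))) + b ω)) :
    ∀ t : EuclideanSpace ℝ (Fin d),
      ‖∫ ω, Complex.exp ((⟪t, X ω⟫ : ℝ) * Complex.I) ∂μ‖ ≤
        ∫ ω, ∏' j,
          ‖∫ ω', Complex.exp ((⟪toEuc ((A j ω)ᵀ *ᵥ ofEuc t), Xc j ω'⟫ : ℝ) * Complex.I) ∂μ‖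
          ∂μ := by
  intro t
  classical
  let e : EuclideanSpace ℝ (Fin d) → ℂ := fun v => Complex.exp ((⟪t, v⟫ : ℝ) * Complex.I)
  have he : Continuous e := continuous_expInner t
  have hnorm_e : ∀ v, ‖e v‖ = 1 := fun v => Complex.norm_exp_ofReal_mul_I _
  let T : ℕ → Ω → EuclideanSpace ℝ (Fin d) := fun j ω => toEuc (A j ω *ᵥ ofEuc (Xc j ω))
  have hTm : ∀ j, Measurable (T j) := fun j =>
    continuous_mulVec_pair.measurable.comp ((hAm j).prodMk (hXcm j))
  let S : ℕ → Ω → EuclideanSpace ℝ (Fin d) := fun n ω => ∑ j ∈ Finset.range n, T j ω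
  have hSm : ∀ n, Measurable (S n) := fun n => Finset.measurable_sum _ fun j _ => hTm j
  let Y : Ω → EuclideanSpace ℝ (Fin d) :=
    fun ω => (∑' j, toEuc (A j ω *ᵥ ofEuc (Xc j ω))) + b ω
  have htend : ∀ᵐ ω ∂μ, Tendsto (fun n => S n ω + b ω) atTop (𝓝 (Y ω)) := by
    filter_upwards [hsum] with ω hω
    exact hω.hasSum.tendsto_sum_nat.add tendsto_const_nhds
  have hYae : AEMeasurable Y μ :=
    aemeasurable_of_tendsto_metrizable_ae' (fun n => ((hSm n).add hbm).aemeasurable) htend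
  -- Step 1 : transfer the law
  have step1 : ∫ ω, e (X ω) ∂μ = ∫ ω, e (Y ω) ∂μ := by
    rw [← integral_map hXm.aemeasurable he.aestronglyMeasurable, hlaw,
      integral_map hYae he.aestronglyMeasurable]
  -- Step 2 : dominated convergence for truncated sums
  have step2 : Tendsto (fun n => ∫ ω, e (S n ω + b ω) ∂μ) atTop (𝓝 (∫ ω, e (Y ω) ∂μ)) := by
    refine tendsto_integral_of_dominated_convergence (fun _ => (1:ℝ))
      (fun n => (he.measurable.comp ((hSm n).add hbm)).aestronglyMeasurable)
      (integrable_const 1)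
      (fun n => Eventually.of_forall fun ω => le_of_eq (hnorm_e _)) ?_
    filter_upwards [htend] with ω hω
    exact (he.tendsto _).comp hω
  -- Φ j m = characteristic function of X^{(j)} at mᵀ t
  let Φ : ℕ → (Fin d → Fin d → ℝ) → ℂ := fun j m =>
    ∫ ω', Complex.exp ((⟪toEuc ((Matrix.of m)ᵀ *ᵥ ofEuc t), Xc j ω'⟫ : ℝ) * Complex.I) ∂μ
  have hΦc : ∀ j, Continuous (Φ j) := fun j => continuous_phi μ (Xc j) (hXcm j) t
  have hΦ1 : ∀ j m, ‖Φ j m‖ ≤ 1 := by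
    intro j m
    refine (norm_integral_le_of_norm_le (integrable_const (1:ℝ))
      (Eventually.of_forall fun ω' => le_of_eq (Complex.norm_exp_ofReal_mul_I _))).trans ?_
    simp
  -- the independence as a product measure identity
  let W : Ω → (ℕ → Fin d → Fin d → ℝ) × EuclideanSpace ℝ (Fin d) :=
    fun ω => ((fun j => Matrix.of.symm (A j ω)), b ω)
  let Z : Ω → ℕ → EuclideanSpace ℝ (Fin d) := fun ω j => Xc j ω
  have hWm : Measurable W := (measurable_pi_lambda _ fun j => hAm j).prodMk hbm
  have hZm : Measurable Z := measurable_pi_lambda _ hXcm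
  have hmap : μ.map (fun ω => (W ω, Z ω)) = (μ.map W).prod (μ.map Z) :=
    (indepFun_iff_map_prod_eq_prod_map_map hWm.aemeasurable hZm.aemeasurable).mp hindep
  have hPW : IsProbabilityMeasure (μ.map W) := Measure.isProbabilityMeasure_map hWm.aemeasurable
  have hPZ : IsProbabilityMeasure (μ.map Z) := Measure.isProbabilityMeasure_map hZm.aemeasurable
  -- Step 3 : compute the truncated integral by conditioning
  have step3 : ∀ n, ∫ ω, e (S n ω + b ω) ∂μ
      = ∫ ω, e (b ω) * ∏ j ∈ Finset.range n, Φ j (Matrix.of.symm (A j ω)) ∂μ := by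
    intro n
    set Fn : ((ℕ → Fin d → Fin d → ℝ) × EuclideanSpace ℝ (Fin d))
        × (ℕ → EuclideanSpace ℝ (Fin d)) → ℂ :=
      fun p => e ((∑ j ∈ Finset.range n, toEuc (Matrix.of (p.1.1 j) *ᵥ ofEuc (p.2 j))) + p.1.2)
      with hFn
    have hFnc : Continuous Fn := by
      refine he.comp (Continuous.add ?_ (continuous_snd.comp continuous_fst))
      refine continuous_finset_sum _ fun j _ => ?_
      have hpair : Continuous fun p : ((ℕ → Fin d → Fin d → ℝ) × EuclideanSpace ℝ (Fin d))
          × (ℕ → EuclideanSpace ℝ (Fin d)) => (p.1.1 j, p.2 j) :=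
        ((continuous_apply j).comp (continuous_fst.comp continuous_fst)).prodMk
          ((continuous_apply j).comp continuous_snd)
      exact continuous_mulVec_pair.comp hpair
    have h1 : ∫ ω, e (S n ω + b ω) ∂μ = ∫ p, Fn p ∂(μ.map fun ω => (W ω, Z ω)) := by
      rw [integral_map (hWm.prodMk hZm).aemeasurable hFnc.aestronglyMeasurable]
      rfl
    have hFint : Integrable Fn ((μ.map W).prod (μ.map Z)) :=
      (integrable_const (1:ℝ)).mono' hFnc.aestronglyMeasurable
        (Eventually.of_forall fun p => le_of_eq (hnorm_e _))
    have h2 : ∫ p, Fn p ∂((μ.map W).prod (μ.map Z))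
        = ∫ aβ, ∫ x, Fn (aβ, x) ∂(μ.map Z) ∂(μ.map W) := integral_prod _ hFint
    have h3 : ∀ aβ : (ℕ → Fin d → Fin d → ℝ) × EuclideanSpace ℝ (Fin d),
        ∫ x, Fn (aβ, x) ∂(μ.map Z) = e aβ.2 * ∏ j ∈ Finset.range n, Φ j (aβ.1 j) := by
      rintro ⟨a, β⟩
      have hfe : ∀ x : ℕ → EuclideanSpace ℝ (Fin d), Fn ((a, β), x)
          = e β * ∏ j ∈ Finset.range n,
              Complex.exp ((⟪toEuc ((Matrix.of (a j))ᵀ *ᵥ ofEuc t), x j⟫ : ℝ) * Complex.I) := by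
        intro x
        show Complex.exp _ = _
        have hin : (⟪t, (∑ j ∈ Finset.range n,
              toEuc (Matrix.of (a j) *ᵥ ofEuc (x j))) + β⟫ : ℝ)
            = (∑ j ∈ Finset.range n,
                (⟪toEuc ((Matrix.of (a j))ᵀ *ᵥ ofEuc t), x j⟫ : ℝ)) + ⟪t, β⟫ := by
          rw [inner_add_right, inner_sum]
          simp_rw [inner_transpose]
        rw [hin]
        push_cast
        rw [add_mul, Complex.exp_add, Finset.sum_mul, Complex.exp_sum, mul_comm]
      calc ∫ x, Fn ((a, β), x) ∂(μ.map Z)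
          = ∫ x, e β * ∏ j ∈ Finset.range n,
              Complex.exp ((⟪toEuc ((Matrix.of (a j))ᵀ *ᵥ ofEuc t), x j⟫ : ℝ) * Complex.I)
              ∂(μ.map Z) := by
            exact integral_congr_ae (Eventually.of_forall hfe)
        _ = e β * ∫ x, ∏ j ∈ Finset.range n,
              Complex.exp ((⟪toEuc ((Matrix.of (a j))ᵀ *ᵥ ofEuc t), x j⟫ : ℝ) * Complex.I)
              ∂(μ.map Z) := integral_const_mul _ _
        _ = e β * ∫ ω, ∏ j ∈ Finset.range n,
              Complex.exp ((⟪toEuc ((Matrix.of (a j))ᵀ *ᵥ ofEuc t), Xc j ω⟫ : ℝ) * Complex.I)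
              ∂μ := by
            have hc : Continuous fun x : ℕ → EuclideanSpace ℝ (Fin d) =>
                ∏ j ∈ Finset.range n, Complex.exp
                  ((⟪toEuc ((Matrix.of (a j))ᵀ *ᵥ ofEuc t), x j⟫ : ℝ) * Complex.I) :=
              continuous_finset_prod _ fun j _ =>
                (continuous_expInner _).comp (continuous_apply j)
            rw [integral_map hZm.aemeasurable hc.aestronglyMeasurable]
        _ = e β * ∏ j ∈ Finset.range n, Φ j (a j) := by
            rw [iIndep_integral_prod hiid hXcm
              (fun j s => Complex.exp ((⟪toEuc ((Matrix.of (a j))ᵀ *ᵥ ofEuc t), s⟫ : ℝ)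
                * Complex.I))
              (fun j => (continuous_expInner _).measurable) n]
    have h4 : ∫ aβ, e aβ.2 * ∏ j ∈ Finset.range n, Φ j (aβ.1 j) ∂(μ.map W)
        = ∫ ω, e (b ω) * ∏ j ∈ Finset.range n, Φ j (Matrix.of.symm (A j ω)) ∂μ := by
      have hG : Continuous fun aβ : (ℕ → Fin d → Fin d → ℝ) × EuclideanSpace ℝ (Fin d) =>
          e aβ.2 * ∏ j ∈ Finset.range n, Φ j (aβ.1 j) :=
        (he.comp continuous_snd).mul (continuous_finset_prod _ fun j _ =>
          (hΦc j).comp ((continuous_apply j).comp continuous_fst))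
      rw [integral_map hWm.aemeasurable hG.aestronglyMeasurable]
    rw [h1, hmap, h2, integral_congr_ae (Eventually.of_forall h3), h4]
  -- Step 4 : bound the norm of the truncated quantity
  have step4 : ∀ n, ‖∫ ω, e (b ω) * ∏ j ∈ Finset.range n, Φ j (Matrix.of.symm (A j ω)) ∂μ‖
      ≤ ∫ ω, ∏ j ∈ Finset.range n, ‖Φ j (Matrix.of.symm (A j ω))‖ ∂μ := by
    intro n
    refine (norm_integral_le_integral_norm _).trans_eq ?_
    refine integral_congr_ae (Eventually.of_forall fun ω => ?_)
    dsimp only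
    rw [norm_mul, hnorm_e, one_mul, norm_prod]
  -- Step 5 : dominated convergence for the products of norms
  have step5 : Tendsto
      (fun n => ∫ ω, ∏ j ∈ Finset.range n, ‖Φ j (Matrix.of.symm (A j ω))‖ ∂μ) atTop
      (𝓝 (∫ ω, ∏' j, ‖Φ j (Matrix.of.symm (A j ω))‖ ∂μ)) := by
    refine tendsto_integral_of_dominated_convergence (fun _ => (1:ℝ))
      (fun n => (Finset.measurable_prod _ fun j _ =>
        ((hΦc j).measurable.norm).comp (hAm j)).aestronglyMeasurable)
      (integrable_const 1) (fun n => Eventually.of_forall fun ω => ?_) ?_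
    · rw [Real.norm_of_nonneg (Finset.prod_nonneg fun j _ => norm_nonneg _)]
      exact Finset.prod_le_one (fun j _ => norm_nonneg _) fun j _ => hΦ1 j _
    · exact Eventually.of_forall fun ω =>
        tendsto_prod_of_le_one (fun j => norm_nonneg _) (fun j => hΦ1 j _)
  -- conclusion
  have hcn : Tendsto
      (fun n => ‖∫ ω, e (b ω) * ∏ j ∈ Finset.range n, Φ j (Matrix.of.symm (A j ω)) ∂μ‖) atTop
      (𝓝 ‖∫ ω, e (Y ω) ∂μ‖) := by
    have h := step2
    simp_rw [step3] at h
    exact (continuous_norm.tendsto _).comp h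
  have final := le_of_tendsto_of_tendsto' hcn step5 step4
  rw [show (∫ ω, Complex.exp ((⟪t, X ω⟫ : ℝ) * Complex.I) ∂μ) = ∫ ω, e (Y ω) ∂μ from step1]
  exact final
end

section
/- Suppose X is an ℝ^d-valued random variable satisfying the distributional equation X =_d Σ_{j=1}^∞ A_j X^{(j)} + b as above, with ψ(x) := sup_{‖t‖ ≥ x} |φ(t)| and ψ_j the corresponding functions for the X^{(j)}. Let α_j := min_{‖t‖=1} ‖A_j^T t‖. Then ψ(x) ≤ E[∏_{j=1}^∞ ψ_j(α_j x)] for all x ≥ 0. -/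
open MeasureTheory ProbabilityTheory Matrix
open scoped RealInnerProductSpace

/-- `ψ(x) := sup_{‖t‖ ≥ x} |φ(t)|`, where `φ` is the characteristic function of `Y`. -/
noncomputable def psiSup {Ω : Type*} [MeasurableSpace Ω] (μ : Measure Ω) {d : ℕ}
    (Y : Ω → EuclideanSpace ℝ (Fin d)) (x : ℝ) : ℝ :=
  sSup {y : ℝ | ∃ t : EuclideanSpace ℝ (Fin d), x ≤ ‖t‖ ∧
    y = ‖∫ ω, Complex.exp ((⟪t, Y ω⟫ : ℝ) * Complex.I) ∂μ‖}

/-- The smallest singular value of `A`, i.e. `min_{‖t‖=1} ‖Aᵀ t‖`. -/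
noncomputable def minSingular {d : ℕ} (A : Matrix (Fin d) (Fin d) ℝ) : ℝ :=
  sInf {y : ℝ | ∃ t : EuclideanSpace ℝ (Fin d), ‖t‖ = 1 ∧ y = ‖toEuc (Aᵀ *ᵥ ofEuc t)‖}

section Aux

variable {Ω : Type*} [MeasurableSpace Ω] {μ : Measure Ω} {d : ℕ}

lemma norm_cexp_real_mul_I (r : ℝ) : ‖Complex.exp ((r : ℂ) * Complex.I)‖ = 1 := by
  simp [Complex.norm_exp]

lemma norm_charFun_le_one [IsProbabilityMeasure μ] (Y : Ω → EuclideanSpace ℝ (Fin d))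
    (t : EuclideanSpace ℝ (Fin d)) :
    ‖∫ ω, Complex.exp ((⟪t, Y ω⟫ : ℝ) * Complex.I) ∂μ‖ ≤ 1 := by
  calc ‖∫ ω, Complex.exp ((⟪t, Y ω⟫ : ℝ) * Complex.I) ∂μ‖
      ≤ ∫ ω, ‖Complex.exp ((⟪t, Y ω⟫ : ℝ) * Complex.I)‖ ∂μ := norm_integral_le_integral_norm _
    _ = ∫ (_ : Ω), (1 : ℝ) ∂μ := by simp only [norm_cexp_real_mul_I]
    _ = 1 := by simp

lemma psiSup_bddAbove [IsProbabilityMeasure μ] (Y : Ω → EuclideanSpace ℝ (Fin d)) (x : ℝ) :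
    BddAbove {y : ℝ | ∃ t : EuclideanSpace ℝ (Fin d), x ≤ ‖t‖ ∧
      y = ‖∫ ω, Complex.exp ((⟪t, Y ω⟫ : ℝ) * Complex.I) ∂μ‖} := by
  refine ⟨1, ?_⟩
  rintro y ⟨t, -, rfl⟩
  exact norm_charFun_le_one Y t

lemma le_psiSup [IsProbabilityMeasure μ] (Y : Ω → EuclideanSpace ℝ (Fin d)) {x : ℝ}
    {t : EuclideanSpace ℝ (Fin d)} (ht : x ≤ ‖t‖) :
    ‖∫ ω, Complex.exp ((⟪t, Y ω⟫ : ℝ) * Complex.I) ∂μ‖ ≤ psiSup μ Y x :=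
  le_csSup (psiSup_bddAbove Y x) ⟨t, ht, rfl⟩

lemma psiSup_nonneg [IsProbabilityMeasure μ] (Y : Ω → EuclideanSpace ℝ (Fin d)) (x : ℝ) :
    0 ≤ psiSup μ Y x := by
  by_cases h : ∃ t : EuclideanSpace ℝ (Fin d), x ≤ ‖t‖
  · obtain ⟨t, ht⟩ := h
    exact le_trans (norm_nonneg _) (le_psiSup Y ht)
  · have : {y : ℝ | ∃ t : EuclideanSpace ℝ (Fin d), x ≤ ‖t‖ ∧
        y = ‖∫ ω, Complex.exp ((⟪t, Y ω⟫ : ℝ) * Complex.I) ∂μ‖} = ∅ := by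
      ext y; simp only [Set.mem_setOf_eq, Set.mem_empty_iff_false, iff_false]
      rintro ⟨t, ht, -⟩; exact h ⟨t, ht⟩
    rw [psiSup, this, Real.sSup_empty]

lemma psiSup_le_one [IsProbabilityMeasure μ] (Y : Ω → EuclideanSpace ℝ (Fin d)) (x : ℝ) :
    psiSup μ Y x ≤ 1 := by
  refine Real.sSup_le ?_ zero_le_one
  rintro y ⟨t, -, rfl⟩
  exact norm_charFun_le_one Y t

lemma psiSup_antitone [IsProbabilityMeasure μ] (Y : Ω → EuclideanSpace ℝ (Fin d)) :
    Antitone (psiSup μ Y) := by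
  intro a b hab
  refine Real.sSup_le ?_ (psiSup_nonneg Y a)
  rintro y ⟨t, ht, rfl⟩
  exact le_psiSup Y (le_trans hab ht)

lemma minSingular_nonneg (A : Matrix (Fin d) (Fin d) ℝ) : 0 ≤ minSingular A :=
  Real.sInf_nonneg (by rintro y ⟨t, -, rfl⟩; exact norm_nonneg _)

lemma ofEuc_smul (c : ℝ) (v : EuclideanSpace ℝ (Fin d)) : ofEuc (c • v) = c • ofEuc v := rfl

lemma toEuc_smul (c : ℝ) (v : Fin d → ℝ) : toEuc (c • v) = c • toEuc v := rfl

lemma toEuc_add (v w : Fin d → ℝ) : toEuc (v + w) = toEuc v + toEuc w := rfl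

lemma minSingular_mul_le {A : Matrix (Fin d) (Fin d) ℝ} {x : ℝ} (hx : 0 ≤ x)
    {t : EuclideanSpace ℝ (Fin d)} (ht : x ≤ ‖t‖) :
    minSingular A * x ≤ ‖toEuc (Aᵀ *ᵥ ofEuc t)‖ := by
  rcases eq_or_ne t 0 with rfl | htne
  · have : x = 0 := le_antisymm (by simpa using ht) hx
    simp [this]
  · set u : EuclideanSpace ℝ (Fin d) := ‖t‖⁻¹ • t with hu
    have htpos : (0:ℝ) < ‖t‖ := norm_pos_iff.mpr htne
    have hun : ‖u‖ = 1 := by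
      rw [hu, norm_smul, norm_inv, norm_norm, inv_mul_cancel₀ htpos.ne']
    have hmem : ‖toEuc (Aᵀ *ᵥ ofEuc u)‖ ∈ {y : ℝ | ∃ t : EuclideanSpace ℝ (Fin d), ‖t‖ = 1 ∧
        y = ‖toEuc (Aᵀ *ᵥ ofEuc t)‖} := ⟨u, hun, rfl⟩
    have hle : minSingular A ≤ ‖toEuc (Aᵀ *ᵥ ofEuc u)‖ :=
      csInf_le ⟨0, by rintro y ⟨s, -, rfl⟩; exact norm_nonneg _⟩ hmem
    have hval : ‖toEuc (Aᵀ *ᵥ ofEuc u)‖ = ‖t‖⁻¹ * ‖toEuc (Aᵀ *ᵥ ofEuc t)‖ := by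
      rw [hu, ofEuc_smul, Matrix.mulVec_smul, toEuc_smul, norm_smul, norm_inv, norm_norm]
    set N := ‖toEuc (Aᵀ *ᵥ ofEuc t)‖ with hN
    have hNneg : 0 ≤ N := norm_nonneg _
    rw [hval] at hle
    calc minSingular A * x ≤ (‖t‖⁻¹ * N) * x :=
          mul_le_mul_of_nonneg_right hle hx
      _ ≤ (‖t‖⁻¹ * N) * ‖t‖ :=
          mul_le_mul_of_nonneg_left ht (by positivity)
      _ = N := by field_simp

lemma abs_coord_le_norm (v : EuclideanSpace ℝ (Fin d)) (i : Fin d) : |ofEuc v i| ≤ ‖v‖ := by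
  rw [EuclideanSpace.norm_eq]
  rw [← Real.sqrt_sq_eq_abs]
  apply Real.sqrt_le_sqrt
  have : (ofEuc v i) ^ 2 ≤ ∑ k, (ofEuc v k) ^ 2 :=
    Finset.single_le_sum (f := fun k => (ofEuc v k) ^ 2) (fun k _ => sq_nonneg _)
      (Finset.mem_univ i)
  have h' : ∀ k, ofEuc v k = v k := fun _ => rfl
  simpa [sq_abs, h'] using this

lemma norm_toEuc_le_sum (v : Fin d → ℝ) : ‖toEuc v‖ ≤ ∑ i, |v i| := by
  rw [EuclideanSpace.norm_eq]
  have h1 : ∑ i, ‖(toEuc v : EuclideanSpace ℝ (Fin d)) i‖ ^ 2 ≤ (∑ i, |v i|) ^ 2 := by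
    calc ∑ i, ‖(toEuc v : EuclideanSpace ℝ (Fin d)) i‖ ^ 2 = ∑ i, |v i| ^ 2 := by
          have h0 : ∀ x, (toEuc v : EuclideanSpace ℝ (Fin d)) x = v x := fun _ => rfl
          simp [Real.norm_eq_abs, sq_abs, h0]
      _ ≤ (∑ i, |v i|) ^ 2 :=
          Finset.sum_sq_le_sq_sum_of_nonneg (fun i _ => abs_nonneg _)
  calc Real.sqrt (∑ i, ‖(toEuc v : EuclideanSpace ℝ (Fin d)) i‖ ^ 2)
      ≤ Real.sqrt ((∑ i, |v i|) ^ 2) := Real.sqrt_le_sqrt h1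
    _ = ∑ i, |v i| := Real.sqrt_sq (by positivity)

lemma minSingular_le_add (M N : Fin d → Fin d → ℝ) :
    minSingular (of M) ≤ minSingular (of N) + ∑ i, ∑ k, |M k i - N k i| := by
  set K := ∑ i, ∑ k, |M k i - N k i| with hK
  have hKnn : 0 ≤ K := Finset.sum_nonneg fun _ _ => Finset.sum_nonneg fun _ _ => abs_nonneg _
  by_cases hd : ∃ u : EuclideanSpace ℝ (Fin d), ‖u‖ = 1
  · obtain ⟨u0, hu0⟩ := hd
    have hne : {y : ℝ | ∃ t : EuclideanSpace ℝ (Fin d), ‖t‖ = 1 ∧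
        y = ‖toEuc ((of N)ᵀ *ᵥ ofEuc t)‖}.Nonempty := ⟨_, u0, hu0, rfl⟩
    rw [minSingular, ← sub_le_iff_le_add]
    apply le_csInf hne
    rintro y ⟨u, hu, rfl⟩
    rw [sub_le_iff_le_add]
    have h1 : minSingular (of M) ≤ ‖toEuc ((of M)ᵀ *ᵥ ofEuc u)‖ :=
      csInf_le ⟨0, by rintro y ⟨s, -, rfl⟩; exact norm_nonneg _⟩ ⟨u, hu, rfl⟩
    refine h1.trans ?_
    have hdec : (of M)ᵀ *ᵥ ofEuc u = (of N)ᵀ *ᵥ ofEuc u + ((of M)ᵀ - (of N)ᵀ) *ᵥ ofEuc u := by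
      rw [Matrix.sub_mulVec]; abel
    have h2 : ‖toEuc (((of M)ᵀ - (of N)ᵀ) *ᵥ ofEuc u)‖ ≤ K := by
      refine (norm_toEuc_le_sum _).trans ?_
      rw [hK]
      apply Finset.sum_le_sum
      intro i _
      have : (((of M)ᵀ - (of N)ᵀ) *ᵥ ofEuc u) i = ∑ k, (M k i - N k i) * ofEuc u k := by
        simp [Matrix.mulVec, dotProduct, Matrix.transpose, Matrix.sub_apply]
      rw [this]
      calc |∑ k, (M k i - N k i) * ofEuc u k| ≤ ∑ k, |(M k i - N k i) * ofEuc u k| :=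
            Finset.abs_sum_le_sum_abs _ _
        _ ≤ ∑ k, |M k i - N k i| := by
            apply Finset.sum_le_sum
            intro k _
            rw [abs_mul]
            have := abs_coord_le_norm u k
            rw [hu] at this
            nlinarith [abs_nonneg (M k i - N k i), abs_nonneg (ofEuc u k)]
    calc ‖toEuc ((of M)ᵀ *ᵥ ofEuc u)‖
        = ‖toEuc ((of N)ᵀ *ᵥ ofEuc u) + toEuc (((of M)ᵀ - (of N)ᵀ) *ᵥ ofEuc u)‖ := by
          rw [hdec, toEuc_add]
      _ ≤ ‖toEuc ((of N)ᵀ *ᵥ ofEuc u)‖ + ‖toEuc (((of M)ᵀ - (of N)ᵀ) *ᵥ ofEuc u)‖ :=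
          norm_add_le _ _
      _ ≤ ‖toEuc ((of N)ᵀ *ᵥ ofEuc u)‖ + K := by linarith
  · have hempty : ∀ P : Matrix (Fin d) (Fin d) ℝ, minSingular P = 0 := by
      intro P
      have : {y : ℝ | ∃ t : EuclideanSpace ℝ (Fin d), ‖t‖ = 1 ∧
          y = ‖toEuc (Pᵀ *ᵥ ofEuc t)‖} = ∅ := by
        ext y
        simp only [Set.mem_setOf_eq, Set.mem_empty_iff_false, iff_false]
        rintro ⟨u, hu, -⟩; exact hd ⟨u, hu⟩
      rw [minSingular, this, Real.sInf_empty]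
    rw [hempty, hempty]
    linarith

lemma continuous_minSingular : Continuous fun M : Fin d → Fin d → ℝ => minSingular (of M) := by
  rw [continuous_iff_continuousAt]
  intro N
  have hKcont : Continuous fun M : Fin d → Fin d → ℝ => ∑ i, ∑ k, |M k i - N k i| := by
    apply continuous_finset_sum
    intro i _
    apply continuous_finset_sum
    intro k _
    exact ((continuous_apply_apply k i).sub continuous_const).abs
  have hb : ∀ M : Fin d → Fin d → ℝ,
      |minSingular (of M) - minSingular (of N)| ≤ ∑ i, ∑ k, |M k i - N k i| := by
    intro M
    rw [abs_sub_le_iff]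
    constructor
    · linarith [minSingular_le_add M N]
    · have := minSingular_le_add N M
      have heq : ∑ i, ∑ k, |N k i - M k i| = ∑ i, ∑ k, |M k i - N k i| := by
        congr 1; ext i; congr 1; ext k; exact abs_sub_comm _ _
      linarith [heq ▸ this]
  have hlim : Filter.Tendsto (fun M : Fin d → Fin d → ℝ => ∑ i, ∑ k, |M k i - N k i|)
      (nhds N) (nhds 0) := by
    have := hKcont.tendsto N
    simpa using this
  have hlow : Filter.Tendsto (fun M : Fin d → Fin d → ℝ =>
      minSingular (of N) - ∑ i, ∑ k, |M k i - N k i|) (nhds N) (nhds (minSingular (of N))) := by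
    simpa using (tendsto_const_nhds.sub hlim)
  have hhigh : Filter.Tendsto (fun M : Fin d → Fin d → ℝ =>
      minSingular (of N) + ∑ i, ∑ k, |M k i - N k i|) (nhds N) (nhds (minSingular (of N))) := by
    simpa using (tendsto_const_nhds.add hlim)
  refine tendsto_of_tendsto_of_tendsto_of_le_of_le hlow hhigh ?_ ?_
  · intro M
    have := hb M
    rw [abs_sub_le_iff] at this
    simp only
    linarith [this.2]
  · intro M
    have := hb M
    rw [abs_sub_le_iff] at this
    simp only
    linarith [this.1]

lemma hasProd_of_Icc {f : ℕ → ℝ} (h0 : ∀ j, 0 ≤ f j) (h1 : ∀ j, f j ≤ 1) :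
    HasProd f (⨅ s : Finset ℕ, ∏ j ∈ s, f j) := by
  have anti : Antitone (fun s : Finset ℕ => ∏ j ∈ s, f j) := by
    intro s t hst
    calc ∏ j ∈ t, f j = (∏ j ∈ t \ s, f j) * ∏ j ∈ s, f j := (Finset.prod_sdiff hst).symm
      _ ≤ 1 * ∏ j ∈ s, f j := by
          apply mul_le_mul_of_nonneg_right
          · exact Finset.prod_le_one (fun j _ => h0 j) (fun j _ => h1 j)
          · exact Finset.prod_nonneg fun j _ => h0 j
      _ = ∏ j ∈ s, f j := one_mul _
  exact tendsto_atTop_ciInf anti ⟨0, by rintro y ⟨s, rfl⟩; exact Finset.prod_nonneg fun j _ => h0 j⟩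

lemma tprod_nonneg_of_Icc {f : ℕ → ℝ} (h0 : ∀ j, 0 ≤ f j) (h1 : ∀ j, f j ≤ 1) :
    0 ≤ ∏' j, f j := by
  rw [(hasProd_of_Icc h0 h1).tprod_eq]
  exact le_ciInf fun s => Finset.prod_nonneg fun j _ => h0 j

lemma tprod_le_one_of_Icc {f : ℕ → ℝ} (h0 : ∀ j, 0 ≤ f j) (h1 : ∀ j, f j ≤ 1) :
    ∏' j, f j ≤ 1 := by
  rw [(hasProd_of_Icc h0 h1).tprod_eq]
  have : (⨅ s : Finset ℕ, ∏ j ∈ s, f j) ≤ ∏ j ∈ (∅ : Finset ℕ), f j :=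
    ciInf_le ⟨0, by rintro y ⟨s, rfl⟩; exact Finset.prod_nonneg fun j _ => h0 j⟩ _
  simpa using this

lemma tendsto_prod_range_of_Icc {f : ℕ → ℝ} (h0 : ∀ j, 0 ≤ f j) (h1 : ∀ j, f j ≤ 1) :
    Filter.Tendsto (fun n => ∏ j ∈ Finset.range n, f j) Filter.atTop (nhds (∏' j, f j)) := by
  rw [(hasProd_of_Icc h0 h1).tprod_eq]
  exact (hasProd_of_Icc h0 h1).tendsto_prod_nat

lemma indepFun_integral_mul_complex [IsProbabilityMeasure μ] {U V : Ω → ℂ}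
    (h : IndepFun U V μ) (hU : AEMeasurable U μ) (hV : AEMeasurable V μ) :
    ∫ ω, U ω * V ω ∂μ = (∫ ω, U ω ∂μ) * ∫ ω, V ω ∂μ := by
  haveI : IsProbabilityMeasure (μ.map U) := Measure.isProbabilityMeasure_map hU
  haveI : IsProbabilityMeasure (μ.map V) := Measure.isProbabilityMeasure_map hV
  have hmap := (indepFun_iff_map_prod_eq_prod_map_map hU hV).mp h
  have h1 : ∫ ω, U ω * V ω ∂μ = ∫ p : ℂ × ℂ, p.1 * p.2 ∂(μ.map fun ω => (U ω, V ω)) := by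
    rw [integral_map (f := fun p : ℂ × ℂ => p.1 * p.2) (hU.prodMk hV) (measurable_fst.mul measurable_snd).aestronglyMeasurable]
  rw [h1, hmap]
  have h2 : ∫ p : ℂ × ℂ, p.1 * p.2 ∂((μ.map U).prod (μ.map V)) =
      (∫ z, z ∂(μ.map U)) * ∫ z, z ∂(μ.map V) := integral_prod_mul (fun z => z) (fun z => z)
  rw [h2]
  have h3 : ∫ z : ℂ, z ∂(μ.map U) = ∫ ω, U ω ∂μ :=
    integral_map (f := fun z : ℂ => z) hU measurable_id.aestronglyMeasurable
  have h4 : ∫ z : ℂ, z ∂(μ.map V) = ∫ ω, V ω ∂μ :=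
    integral_map (f := fun z : ℂ => z) hV measurable_id.aestronglyMeasurable
  rw [h3, h4]

lemma iIndepFun_integral_prod_range [IsProbabilityMeasure μ] {h : ℕ → Ω → ℂ}
    (hInd : iIndepFun h μ) (hm : ∀ j, Measurable (h j)) (n : ℕ) :
    ∫ ω, ∏ j ∈ Finset.range n, h j ω ∂μ = ∏ j ∈ Finset.range n, ∫ ω, h j ω ∂μ := by
  induction n with
  | zero => simp
  | succ n ih =>
    have hind : IndepFun (∏ j ∈ Finset.range n, h j) (h n) μ :=
      hInd.indepFun_prod_range_succ hm n
    have hPm : AEMeasurable (∏ j ∈ Finset.range n, h j) μ := by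
      have h1 : (∏ j ∈ Finset.range n, h j) = fun ω => ∏ j ∈ Finset.range n, h j ω := by
        funext ω; simp
      rw [h1]
      exact (Finset.measurable_prod _ fun j _ => hm j).aemeasurable
    calc ∫ ω, ∏ j ∈ Finset.range (n+1), h j ω ∂μ
        = ∫ ω, (∏ j ∈ Finset.range n, h j) ω * h n ω ∂μ := by
          congr 1; funext ω; rw [Finset.prod_range_succ]; simp
      _ = (∫ ω, (∏ j ∈ Finset.range n, h j) ω ∂μ) * ∫ ω, h n ω ∂μ :=
          indepFun_integral_mul_complex hind hPm (hm n).aemeasurable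
      _ = ∏ j ∈ Finset.range (n+1), ∫ ω, h j ω ∂μ := by
          have h5 : ∫ ω, (∏ j ∈ Finset.range n, h j) ω ∂μ
              = ∫ ω, ∏ j ∈ Finset.range n, h j ω ∂μ := by
            apply integral_congr_ae
            filter_upwards with ω
            simp
          rw [Finset.prod_range_succ, ← ih, h5]

lemma measurable_toEuc_mulVec {M : Ω → Matrix (Fin d) (Fin d) ℝ}
    {v : Ω → EuclideanSpace ℝ (Fin d)}
    (hM : Measurable fun ω => Matrix.of.symm (M ω)) (hv : Measurable v) :
    Measurable fun ω => toEuc (M ω *ᵥ ofEuc (v ω)) := by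
  have : Measurable fun ω => (M ω *ᵥ ofEuc (v ω) : Fin d → ℝ) := by
    apply measurable_pi_lambda
    intro i
    have heq : ∀ ω, (M ω *ᵥ ofEuc (v ω)) i = ∑ k, Matrix.of.symm (M ω) i k * ofEuc (v ω) k := by
      intro ω; simp [Matrix.mulVec, dotProduct]
    simp only [heq]
    apply Finset.measurable_sum
    intro k _
    exact ((measurable_pi_apply k).comp ((measurable_pi_apply i).comp hM)).mul
      ((measurable_pi_apply k).comp (Measurable.comp (WithLp.measurable_ofLp 2 (Fin d → ℝ)) hv))
  exact Measurable.comp (WithLp.measurable_toLp 2 (Fin d → ℝ)) this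

lemma inner_toEuc_mulVec (M : Matrix (Fin d) (Fin d) ℝ) (t v : EuclideanSpace ℝ (Fin d)) :
    (⟪t, toEuc (M *ᵥ ofEuc v)⟫ : ℝ) = ⟪toEuc (Mᵀ *ᵥ ofEuc t), v⟫ := by
  simp only [PiLp.inner_apply, RCLike.inner_apply, conj_trivial]
  have h1 : ∀ i, (toEuc (M *ᵥ ofEuc v) : EuclideanSpace ℝ (Fin d)) i =
      ∑ k, M i k * ofEuc v k := by
    intro i; rfl
  have h2 : ∀ k, (toEuc (Mᵀ *ᵥ ofEuc t) : EuclideanSpace ℝ (Fin d)) k =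
      ∑ i, M i k * ofEuc t i := by
    intro k
    show (Mᵀ *ᵥ ofEuc t) k = _
    simp [Matrix.mulVec, dotProduct, Matrix.transpose_apply]
  calc ∑ i, (toEuc (M *ᵥ ofEuc v) : EuclideanSpace ℝ (Fin d)) i * t i
      = ∑ i, t i * (toEuc (M *ᵥ ofEuc v) : EuclideanSpace ℝ (Fin d)) i :=
        Finset.sum_congr rfl fun _ _ => mul_comm _ _
    _ = ∑ i, ∑ k, t i * (M i k * ofEuc v k) := by
        simp only [h1, Finset.mul_sum]
    _ = ∑ k, ∑ i, t i * (M i k * ofEuc v k) := Finset.sum_comm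
    _ = ∑ k, (toEuc (Mᵀ *ᵥ ofEuc t) : EuclideanSpace ℝ (Fin d)) k * v k := by
        apply Finset.sum_congr rfl
        intro k _
        rw [h2, Finset.sum_mul]
        apply Finset.sum_congr rfl
        intro i _
        show t i * (M i k * ofEuc v k) = M i k * ofEuc t i * v k
        have : ofEuc t i = t i := rfl
        have h3 : ofEuc v k = v k := rfl
        rw [this, h3]; ring
    _ = ∑ k, v k * (toEuc (Mᵀ *ᵥ ofEuc t) : EuclideanSpace ℝ (Fin d)) k :=
        Finset.sum_congr rfl fun _ _ => mul_comm _ _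

end Aux

set_option maxHeartbeats 2000000 in
/-- If `X =_d Σ_j A_j X^{(j)} + b` (with the usual independence and a.s. convergence),
`ψ(x) := sup_{‖t‖≥x} |φ(t)|`, `ψ_j` the corresponding functions for the `X^{(j)}`, and
`α_j := min_{‖t‖=1} ‖A_jᵀ t‖`, then `ψ(x) ≤ E[∏_j ψ_j(α_j x)]` for all `x ≥ 0`. -/
theorem psiSup_recursion_bound
    {Ω : Type*} [MeasurableSpace Ω] (μ : Measure Ω) [IsProbabilityMeasure μ]
    {d : ℕ} (X : Ω → EuclideanSpace ℝ (Fin d))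
    (Xc : ℕ → Ω → EuclideanSpace ℝ (Fin d))
    (A : ℕ → Ω → Matrix (Fin d) (Fin d) ℝ)
    (b : Ω → EuclideanSpace ℝ (Fin d))
    (hXm : Measurable X) (hXcm : ∀ j, Measurable (Xc j))
    (hAm : ∀ j, Measurable fun ω => Matrix.of.symm (A j ω))
    (hbm : Measurable b)
    (hiid : iIndepFun Xc μ)
    (hindep : IndepFun (fun ω => ((fun j => Matrix.of.symm (A j ω)), b ω))
      (fun ω (j : ℕ) => Xc j ω) μ)
    (hsum : ∀ᵐ ω ∂μ, Summable fun j => toEuc (A j ω *ᵥ ofEuc (Xc j ω)))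
    (hlaw : μ.map X =
      μ.map (fun ω => (∑' j, toEuc (A j ω *ᵥ ofEuc (Xc j ω))) + b ω)) :
    ∀ x : ℝ, 0 ≤ x →
      psiSup μ X x ≤ ∫ ω, ∏' j, psiSup μ (Xc j) (minSingular (A j ω) * x) ∂μ := by
  intro x hx
  -- abbreviations
  set S : Ω → EuclideanSpace ℝ (Fin d) :=
    fun ω => (∑' j, toEuc (A j ω *ᵥ ofEuc (Xc j ω))) + b ω with hS
  set W : Ω → (ℕ → Fin d → Fin d → ℝ) × EuclideanSpace ℝ (Fin d) :=
    fun ω => ((fun j => Matrix.of.symm (A j ω)), b ω) with hW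
  set Z : Ω → ℕ → EuclideanSpace ℝ (Fin d) := fun ω j => Xc j ω with hZ
  have hWm : Measurable W := (measurable_pi_lambda _ fun j => hAm j).prodMk hbm
  have hZm : Measurable Z := measurable_pi_lambda _ fun j => hXcm j
  have hcontexp : Continuous fun r : ℝ => Complex.exp ((r : ℂ) * Complex.I) :=
    Complex.continuous_exp.comp (Complex.continuous_ofReal.mul continuous_const)
  have hcm : ∀ j, Measurable fun ω => toEuc (A j ω *ᵥ ofEuc (Xc j ω)) :=
    fun j => measurable_toEuc_mulVec (hAm j) (hXcm j)
  -- the per-ω ψ-factor and its measurability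
  have hψmeas : ∀ j, Measurable fun ω => psiSup μ (Xc j) (minSingular (A j ω) * x) := by
    intro j
    have h1 : Measurable fun ω => minSingular (A j ω) * x :=
      (continuous_minSingular.measurable.comp (hAm j)).mul_const x
    exact ((psiSup_antitone (Xc j)).measurable).comp h1
  have hψ0 : ∀ j (ω : Ω), 0 ≤ psiSup μ (Xc j) (minSingular (A j ω) * x) :=
    fun j ω => psiSup_nonneg (Xc j) _
  have hψ1 : ∀ j (ω : Ω), psiSup μ (Xc j) (minSingular (A j ω) * x) ≤ 1 :=
    fun j ω => psiSup_le_one (Xc j) _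
  have hRnn : 0 ≤ ∫ ω, ∏' j, psiSup μ (Xc j) (minSingular (A j ω) * x) ∂μ :=
    integral_nonneg fun ω => tprod_nonneg_of_Icc (fun j => hψ0 j ω) (fun j => hψ1 j ω)
  refine Real.sSup_le ?_ hRnn
  rintro y ⟨t, ht, rfl⟩
  -- Step 1: rewrite the characteristic function using the distributional identity
  have hinner_cont : Continuous fun v : EuclideanSpace ℝ (Fin d) =>
      Complex.exp (((⟪t, v⟫ : ℝ) : ℂ) * Complex.I) :=
    hcontexp.comp (Continuous.inner continuous_const continuous_id)
  have hSm : AEMeasurable S μ := by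
    have hpart : ∀ n : ℕ, Measurable fun ω =>
        ∑ j ∈ Finset.range n, toEuc (A j ω *ᵥ ofEuc (Xc j ω)) :=
      fun n => Finset.measurable_sum _ fun j _ => hcm j
    have htsum : AEMeasurable (fun ω => ∑' j, toEuc (A j ω *ᵥ ofEuc (Xc j ω))) μ := by
      apply aemeasurable_of_tendsto_metrizable_ae Filter.atTop
        (fun n => (hpart n).aemeasurable)
      filter_upwards [hsum] with ω hω
      exact hω.hasSum.tendsto_sum_nat
    exact htsum.add hbm.aemeasurable
  have hφeq : ∫ ω, Complex.exp (((⟪t, X ω⟫ : ℝ) : ℂ) * Complex.I) ∂μ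
      = ∫ ω, Complex.exp (((⟪t, S ω⟫ : ℝ) : ℂ) * Complex.I) ∂μ := by
    rw [← integral_map hXm.aemeasurable hinner_cont.aestronglyMeasurable, hlaw,
      integral_map hSm hinner_cont.aestronglyMeasurable]
  -- Step 2: the approximating sequence
  set F : ℕ → Ω → ℂ := fun n ω =>
    Complex.exp (((⟪t, b ω⟫ : ℝ) : ℂ) * Complex.I) *
      ∏ j ∈ Finset.range n,
        Complex.exp (((⟪toEuc ((A j ω)ᵀ *ᵥ ofEuc t), Xc j ω⟫ : ℝ) : ℂ) * Complex.I) with hF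
  have hsjm : ∀ j, Measurable fun ω => toEuc ((A j ω)ᵀ *ᵥ ofEuc t) := by
    intro j
    apply measurable_toEuc_mulVec (M := fun ω => (A j ω)ᵀ) (v := fun _ => t)
    · exact measurable_pi_lambda _ fun i => measurable_pi_lambda _ fun k =>
        (measurable_pi_apply i).comp ((measurable_pi_apply k).comp (hAm j))
    · exact measurable_const
  have hFm : ∀ n, Measurable (F n) := by
    intro n
    apply Measurable.mul
    · exact hcontexp.measurable.comp (Measurable.inner measurable_const hbm)
    · exact Finset.measurable_prod _ fun j _ =>
        hcontexp.measurable.comp (Measurable.inner (hsjm j) (hXcm j))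
  have hFnorm : ∀ n ω, ‖F n ω‖ = 1 := by
    intro n ω
    rw [hF]
    simp only [norm_mul, norm_prod, norm_cexp_real_mul_I]
    simp
  -- Step 3: a.e. convergence of F n to the characteristic integrand of S
  have h_lim : ∀ᵐ ω ∂μ, Filter.Tendsto (fun n => F n ω) Filter.atTop
      (nhds (Complex.exp (((⟪t, S ω⟫ : ℝ) : ℂ) * Complex.I))) := by
    filter_upwards [hsum] with ω hω
    have hθ : Summable fun j => (⟪t, toEuc (A j ω *ᵥ ofEuc (Xc j ω))⟫ : ℝ) := by
      have := (innerSL ℝ t).summable hω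
      simpa using this
    have hsum_inner : (⟪t, S ω⟫ : ℝ)
        = (∑' j, (⟪t, toEuc (A j ω *ᵥ ofEuc (Xc j ω))⟫ : ℝ)) + ⟪t, b ω⟫ := by
      rw [hS]
      simp only [inner_add_right]
      congr 1
      have := (innerSL ℝ t).map_tsum hω
      simpa using this
    have htend0 : Filter.Tendsto
        (fun n => ∑ j ∈ Finset.range n, (⟪t, toEuc (A j ω *ᵥ ofEuc (Xc j ω))⟫ : ℝ))
        Filter.atTop (nhds (∑' j, (⟪t, toEuc (A j ω *ᵥ ofEuc (Xc j ω))⟫ : ℝ))) :=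
      hθ.hasSum.tendsto_sum_nat
    have hcont2 : Continuous fun r : ℝ =>
        Complex.exp (((r + ⟪t, b ω⟫ : ℝ) : ℂ) * Complex.I) :=
      hcontexp.comp (continuous_id.add continuous_const)
    have htend1 := (hcont2.tendsto _).comp htend0
    have hFeq : ∀ n, F n ω = Complex.exp
        ((((∑ j ∈ Finset.range n, (⟪t, toEuc (A j ω *ᵥ ofEuc (Xc j ω))⟫ : ℝ))
          + ⟪t, b ω⟫ : ℝ) : ℂ) * Complex.I) := by
      intro n
      rw [hF]
      push_cast
      rw [add_mul, Complex.exp_add, Finset.sum_mul, Complex.exp_sum]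
      rw [mul_comm]
      congr 1
      apply Finset.prod_congr rfl
      intro j _
      rw [inner_toEuc_mulVec]
    have hgoal : Complex.exp (((⟪t, S ω⟫ : ℝ) : ℂ) * Complex.I)
        = Complex.exp ((((∑' j, (⟪t, toEuc (A j ω *ᵥ ofEuc (Xc j ω))⟫ : ℝ))
          + ⟪t, b ω⟫ : ℝ) : ℂ) * Complex.I) := by
      rw [hsum_inner]
    rw [hgoal]
    apply Filter.Tendsto.congr (fun n => (hFeq n).symm)
    exact htend1
  -- Step 4: convergence of the integrals
  have h_tendI : Filter.Tendsto (fun n => ∫ ω, F n ω ∂μ) Filter.atTop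
      (nhds (∫ ω, Complex.exp (((⟪t, S ω⟫ : ℝ) : ℂ) * Complex.I) ∂μ)) := by
    apply tendsto_integral_of_dominated_convergence (fun _ => (1 : ℝ))
      (fun n => (hFm n).aestronglyMeasurable) (integrable_const 1)
      (fun n => Filter.Eventually.of_forall fun ω => le_of_eq (hFnorm n ω)) h_lim
  -- Step 5: product structure via independence
  have hmapWZ : μ.map (fun ω => (W ω, Z ω)) = (μ.map W).prod (μ.map Z) :=
    (indepFun_iff_map_prod_eq_prod_map_map hWm.aemeasurable hZm.aemeasurable).mp hindep
  haveI hκP : IsProbabilityMeasure (μ.map W) := Measure.isProbabilityMeasure_map hWm.aemeasurable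
  haveI hνP : IsProbabilityMeasure (μ.map Z) := Measure.isProbabilityMeasure_map hZm.aemeasurable
  set G : ℕ → ((ℕ → Fin d → Fin d → ℝ) × EuclideanSpace ℝ (Fin d)) ×
      (ℕ → EuclideanSpace ℝ (Fin d)) → ℂ := fun n p =>
    Complex.exp (((⟪t, p.1.2⟫ : ℝ) : ℂ) * Complex.I) *
      ∏ j ∈ Finset.range n,
        Complex.exp (((⟪toEuc ((Matrix.of (p.1.1 j))ᵀ *ᵥ ofEuc t), p.2 j⟫ : ℝ) : ℂ) *
          Complex.I) with hG
  have hGsm : ∀ j : ℕ, Measurable fun p : ((ℕ → Fin d → Fin d → ℝ) ×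
      EuclideanSpace ℝ (Fin d)) × (ℕ → EuclideanSpace ℝ (Fin d)) =>
      toEuc ((Matrix.of (p.1.1 j))ᵀ *ᵥ ofEuc t) := by
    intro j
    have hM : Measurable fun p : ((ℕ → Fin d → Fin d → ℝ) ×
        EuclideanSpace ℝ (Fin d)) × (ℕ → EuclideanSpace ℝ (Fin d)) =>
        Matrix.of.symm ((Matrix.of (p.1.1 j))ᵀ) :=
      measurable_pi_lambda _ fun i => measurable_pi_lambda _ fun k =>
        (measurable_pi_apply i).comp ((measurable_pi_apply k).comp
          ((measurable_pi_apply j).comp (measurable_fst.comp measurable_fst)))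
    exact measurable_toEuc_mulVec hM measurable_const
  have hGm : ∀ n, Measurable (G n) := by
    intro n
    apply Measurable.mul
    · exact hcontexp.measurable.comp
        (Measurable.inner measurable_const (measurable_snd.comp measurable_fst))
    · exact Finset.measurable_prod _ fun j _ => hcontexp.measurable.comp
        (Measurable.inner (hGsm j) ((measurable_pi_apply j).comp measurable_snd))
  have hGnorm : ∀ n p, ‖G n p‖ = 1 := by
    intro n p
    rw [hG]
    simp only [norm_mul, norm_prod, norm_cexp_real_mul_I]
    simp
  have hGint : ∀ n, Integrable (G n) ((μ.map W).prod (μ.map Z)) := by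
    intro n
    refine Integrable.mono' (integrable_const (1 : ℝ)) (hGm n).aestronglyMeasurable ?_
    filter_upwards with p
    rw [hGnorm]
  have hGF : ∀ n ω, G n (W ω, Z ω) = F n ω := fun n ω => rfl
  have hIn_eq : ∀ n, ∫ ω, F n ω ∂μ
      = ∫ w, ∫ z, G n (w, z) ∂(μ.map Z) ∂(μ.map W) := by
    intro n
    calc ∫ ω, F n ω ∂μ = ∫ ω, G n (W ω, Z ω) ∂μ := by
          apply integral_congr_ae
          filter_upwards with ω
          rw [hGF]
      _ = ∫ p, G n p ∂(μ.map fun ω => (W ω, Z ω)) :=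
          (integral_map (hWm.prodMk hZm).aemeasurable (hGm n).aestronglyMeasurable).symm
      _ = ∫ p, G n p ∂((μ.map W).prod (μ.map Z)) := by rw [hmapWZ]
      _ = ∫ w, ∫ z, G n (w, z) ∂(μ.map Z) ∂(μ.map W) := integral_prod _ (hGint n)
  -- Step 6: evaluate the inner integral using independence of the Xc's
  have hinner_eval : ∀ n w, ∫ z, G n (w, z) ∂(μ.map Z)
      = Complex.exp (((⟪t, w.2⟫ : ℝ) : ℂ) * Complex.I) *
        ∏ j ∈ Finset.range n, ∫ ω, Complex.exp
          (((⟪toEuc ((Matrix.of (w.1 j))ᵀ *ᵥ ofEuc t), Xc j ω⟫ : ℝ) : ℂ) * Complex.I) ∂μ := by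
    intro n w
    have hzm : Measurable fun z : ℕ → EuclideanSpace ℝ (Fin d) =>
        ∏ j ∈ Finset.range n, Complex.exp
          (((⟪toEuc ((Matrix.of (w.1 j))ᵀ *ᵥ ofEuc t), z j⟫ : ℝ) : ℂ) * Complex.I) :=
      Finset.measurable_prod _ fun j _ => hcontexp.measurable.comp
        (Measurable.inner measurable_const (measurable_pi_apply j))
    have h1 : ∫ z, G n (w, z) ∂(μ.map Z)
        = Complex.exp (((⟪t, w.2⟫ : ℝ) : ℂ) * Complex.I) *
          ∫ z, ∏ j ∈ Finset.range n, Complex.exp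
            (((⟪toEuc ((Matrix.of (w.1 j))ᵀ *ᵥ ofEuc t), z j⟫ : ℝ) : ℂ) * Complex.I)
            ∂(μ.map Z) := by
      simp only [hG]
      exact integral_const_mul _ _
    have h2 : ∫ z, (∏ j ∈ Finset.range n, Complex.exp
          (((⟪toEuc ((Matrix.of (w.1 j))ᵀ *ᵥ ofEuc t), z j⟫ : ℝ) : ℂ) * Complex.I))
          ∂(μ.map Z)
        = ∫ ω, ∏ j ∈ Finset.range n, Complex.exp
            (((⟪toEuc ((Matrix.of (w.1 j))ᵀ *ᵥ ofEuc t), Xc j ω⟫ : ℝ) : ℂ) * Complex.I) ∂μ :=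
      integral_map hZm.aemeasurable hzm.aestronglyMeasurable
    have hcomp : iIndepFun (fun j ω => Complex.exp
        (((⟪toEuc ((Matrix.of (w.1 j))ᵀ *ᵥ ofEuc t), Xc j ω⟫ : ℝ) : ℂ) * Complex.I)) μ := by
      exact hiid.comp (fun j v => Complex.exp
          (((⟪toEuc ((Matrix.of (w.1 j))ᵀ *ᵥ ofEuc t), v⟫ : ℝ) : ℂ) * Complex.I))
        (fun j => (hcontexp.comp (Continuous.inner continuous_const continuous_id)).measurable)
    have h3 := iIndepFun_integral_prod_range hcomp (fun j => (hcontexp.comp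
        (Continuous.inner continuous_const continuous_id)).measurable.comp (hXcm j)) n
    rw [h1, h2, h3]
  -- Step 7: bound the inner integral by the ψ's
  have hw_bound : ∀ n w, ‖∫ z, G n (w, z) ∂(μ.map Z)‖
      ≤ ∏ j ∈ Finset.range n, psiSup μ (Xc j) (minSingular (Matrix.of (w.1 j)) * x) := by
    intro n w
    rw [hinner_eval n w, norm_mul, norm_cexp_real_mul_I, one_mul, norm_prod]
    refine Finset.prod_le_prod (fun j _ => norm_nonneg _) (fun j _ => ?_)
    exact le_psiSup (Xc j) (minSingular_mul_le hx ht)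
  -- Step 8: integrate the bound
  have hQmeas : ∀ n, Measurable fun w : (ℕ → Fin d → Fin d → ℝ) × EuclideanSpace ℝ (Fin d) =>
      ∏ j ∈ Finset.range n, psiSup μ (Xc j) (minSingular (Matrix.of (w.1 j)) * x) := by
    intro n
    refine Finset.measurable_prod _ fun j _ => ?_
    exact ((psiSup_antitone (Xc j)).measurable).comp
      ((continuous_minSingular.measurable.comp
        ((measurable_pi_apply j).comp measurable_fst)).mul_const x)
  have hQint : ∀ n, Integrable (fun w : (ℕ → Fin d → Fin d → ℝ) × EuclideanSpace ℝ (Fin d) =>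
      ∏ j ∈ Finset.range n, psiSup μ (Xc j) (minSingular (Matrix.of (w.1 j)) * x))
      (μ.map W) := by
    intro n
    refine Integrable.mono' (integrable_const (1 : ℝ)) (hQmeas n).aestronglyMeasurable ?_
    filter_upwards with w
    rw [Real.norm_eq_abs, abs_of_nonneg (Finset.prod_nonneg fun j _ => psiSup_nonneg (Xc j) _)]
    exact Finset.prod_le_one (fun j _ => psiSup_nonneg (Xc j) _)
      (fun j _ => psiSup_le_one (Xc j) _)
  have hBn : ∀ n, ‖∫ ω, F n ω ∂μ‖
      ≤ ∫ ω, ∏ j ∈ Finset.range n, psiSup μ (Xc j) (minSingular (A j ω) * x) ∂μ := by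
    intro n
    calc ‖∫ ω, F n ω ∂μ‖ = ‖∫ w, ∫ z, G n (w, z) ∂(μ.map Z) ∂(μ.map W)‖ := by rw [hIn_eq n]
      _ ≤ ∫ w, ‖∫ z, G n (w, z) ∂(μ.map Z)‖ ∂(μ.map W) := norm_integral_le_integral_norm _
      _ ≤ ∫ w, ∏ j ∈ Finset.range n,
            psiSup μ (Xc j) (minSingular (Matrix.of (w.1 j)) * x) ∂(μ.map W) :=
          integral_mono_of_nonneg (Filter.Eventually.of_forall fun w => norm_nonneg _)
            (hQint n) (Filter.Eventually.of_forall (hw_bound n))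
      _ = ∫ ω, ∏ j ∈ Finset.range n, psiSup μ (Xc j) (minSingular (A j ω) * x) ∂μ := by
          rw [integral_map hWm.aemeasurable (hQmeas n).aestronglyMeasurable]
          rfl
  -- Step 9: pass to the limit
  have hBtend : Filter.Tendsto
      (fun n => ∫ ω, ∏ j ∈ Finset.range n, psiSup μ (Xc j) (minSingular (A j ω) * x) ∂μ)
      Filter.atTop
      (nhds (∫ ω, ∏' j, psiSup μ (Xc j) (minSingular (A j ω) * x) ∂μ)) := by
    apply tendsto_integral_of_dominated_convergence (fun _ => (1 : ℝ))
      (fun n => (Finset.measurable_prod _ fun j _ => hψmeas j).aestronglyMeasurable)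
      (integrable_const 1)
    · intro n
      filter_upwards with ω
      rw [Real.norm_eq_abs, abs_of_nonneg (Finset.prod_nonneg fun j _ => hψ0 j ω)]
      exact Finset.prod_le_one (fun j _ => hψ0 j ω) (fun j _ => hψ1 j ω)
    · filter_upwards with ω
      exact tendsto_prod_range_of_Icc (fun j => hψ0 j ω) (fun j => hψ1 j ω)
  have hnt : Filter.Tendsto (fun n => ‖∫ ω, F n ω ∂μ‖) Filter.atTop
      (nhds ‖∫ ω, Complex.exp (((⟪t, S ω⟫ : ℝ) : ℂ) * Complex.I) ∂μ‖) := h_tendI.norm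
  rw [hφeq]
  exact le_of_tendsto_of_tendsto' hnt hBtend hBn
end

section
/- Suppose (W, X) is a pair of real-valued random variables with E[W] = E[X] = 0, satisfying the bivariate split-tree fixed-point equation (W, X)^T =_d Σ_{j=1}^b M_j (W^{(j)}, X^{(j)})^T + η(V), where M_j = [[V_j², V_j(1−V_j)],[0, V_j]], η(V) = C(V)·(1,1)^T + (c(1 − Σ_j V_j²) − 1, 0)^T, and suppose Σ_j V_j² is almost surely equal to a constant. Then, writing X for the solution of the one-dimensional equation X =_d Σ_j V_j X^{(j)} + C(V), the pair (X, X) is a solution of the bivariate equation. In particular, c·E[1 − Σ_j V_j²] = 1. -/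
open MeasureTheory ProbabilityTheory

/-- Bivariate split-tree fixed-point equation: if `(W, X)` is centred and solves
`(W,X)ᵀ =_d Σ_j M_j (W^{(j)}, X^{(j)})ᵀ + η(V)` with
`M_j = [[V_j², V_j(1−V_j)],[0, V_j]]` and
`η(V) = C(V)(1,1)ᵀ + (c(1 − Σ_j V_j²) − 1, 0)ᵀ`, and `Σ_j V_j²` is a.s. constant, then
`c·E[1 − Σ_j V_j²] = 1`, and for any solution `X̃` of the one-dimensional equation
`X =_d Σ_j V_j X^{(j)} + C(V)` (with copies `Xc j`), the pair `(X̃, X̃)` solves the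
bivariate equation. -/
theorem split_tree_diagonal_solution
    {Ω : Type*} [MeasurableSpace Ω] (μ : Measure Ω) [IsProbabilityMeasure μ]
    {b : ℕ} (V : Ω → Fin b → ℝ) (hVmeas : Measurable V)
    (hVprob : ∀ᵐ ω ∂μ, (∀ j, 0 ≤ V ω j) ∧ ∑ j, V ω j = 1)
    (mubar : ℝ) (hmubar : mubar ≠ 0)
    (hmu : mubar = -∫ ω, ∑ j, V ω j * Real.log (V ω j) ∂μ)
    (Cfun : (Fin b → ℝ) → ℝ)
    (hCfun : ∀ w, Cfun w = 1 + (1 / mubar) * ∑ j, w j * Real.log (w j))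
    (c : ℝ)
    (W X : Ω → ℝ) (hWmeas : Measurable W) (hXmeas : Measurable X)
    (hWint : Integrable W μ) (hXint : Integrable X μ)
    (hWmean : ∫ ω, W ω ∂μ = 0) (hXmean : ∫ ω, X ω ∂μ = 0)
    (Pc : Fin b → Ω → ℝ × ℝ) (hPcmeas : ∀ j, Measurable (Pc j))
    (hPc : ∀ j, μ.map (Pc j) = μ.map fun ω => (W ω, X ω))
    (hiid : iIndepFun Pc μ)
    (hindepV : IndepFun V (fun ω (j : Fin b) => Pc j ω) μ)
    (heq : (μ.map fun ω => (W ω, X ω)) = μ.map (fun ω =>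
      (∑ j, (V ω j ^ 2 * (Pc j ω).1 + V ω j * (1 - V ω j) * (Pc j ω).2)
          + Cfun (V ω) + c * (1 - ∑ j, V ω j ^ 2) - 1,
        ∑ j, V ω j * (Pc j ω).2 + Cfun (V ω))))
    (hCint : Integrable (fun ω => Cfun (V ω)) μ)
    (hCmean : ∫ ω, Cfun (V ω) ∂μ = 0)
    (hSint : Integrable (fun ω => ∑ j, V ω j ^ 2) μ)
    (hprod1 : ∀ j, Integrable (fun ω => V ω j ^ 2 * (Pc j ω).1) μ)
    (hprod2 : ∀ j, Integrable (fun ω => V ω j * (1 - V ω j) * (Pc j ω).2) μ)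
    (hprod3 : ∀ j, Integrable (fun ω => V ω j * (Pc j ω).2) μ)
    (k : ℝ) (hconst : ∀ᵐ ω ∂μ, ∑ j, V ω j ^ 2 = k)
    (Xt : Ω → ℝ) (hXtmeas : Measurable Xt)
    (Xc : Fin b → Ω → ℝ) (hXcmeas : ∀ j, Measurable (Xc j))
    (hXc : ∀ j, μ.map (Xc j) = μ.map Xt)
    (heq1 : μ.map Xt = μ.map fun ω => ∑ j, V ω j * Xc j ω + Cfun (V ω)) :
    c * ∫ ω, (1 - ∑ j, V ω j ^ 2) ∂μ = 1 ∧
    (μ.map fun ω => (Xt ω, Xt ω)) = μ.map (fun ω =>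
      (∑ j, (V ω j ^ 2 * Xc j ω + V ω j * (1 - V ω j) * Xc j ω)
          + Cfun (V ω) + c * (1 - ∑ j, V ω j ^ 2) - 1,
        ∑ j, V ω j * Xc j ω + Cfun (V ω))) := by 
  classical
  -- basic measurability facts
  have hVmeasj : ∀ j : Fin b, Measurable fun ω => V ω j :=
    fun j => (measurable_pi_apply j).comp hVmeas
  have hCmeas : Measurable fun ω => Cfun (V ω) := by
    have : (fun ω => Cfun (V ω)) =
        fun ω => 1 + (1 / mubar) * ∑ j, V ω j * Real.log (V ω j) := by
      funext ω; rw [hCfun]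
    rw [this]
    exact measurable_const.add (measurable_const.mul (Finset.measurable_sum _
      (fun j _ => (hVmeasj j).mul ((hVmeasj j).log))))
  -- V j ∈ [0,1] a.e.
  have hVj01 : ∀ j : Fin b, ∀ᵐ ω ∂μ, 0 ≤ V ω j ∧ V ω j ≤ 1 := by
    intro j
    filter_upwards [hVprob] with ω hω
    refine ⟨hω.1 j, ?_⟩
    calc V ω j ≤ ∑ i, V ω i :=
          Finset.single_le_sum (fun i _ => hω.1 i) (Finset.mem_univ j)
      _ = 1 := hω.2
  have hV2int : ∀ j : Fin b, Integrable (fun ω => V ω j ^ 2) μ := by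
    intro j
    refine Integrable.mono' (integrable_const 1) ((hVmeasj j).pow_const 2).aestronglyMeasurable ?_
    filter_upwards [hVj01 j] with ω hω
    rw [Real.norm_eq_abs, abs_of_nonneg (by positivity)]
    nlinarith [hω.1, hω.2]
  have hV1int : ∀ j : Fin b, Integrable (fun ω => V ω j * (1 - V ω j)) μ := by
    intro j
    refine Integrable.mono' (integrable_const 1)
      ((hVmeasj j).mul (measurable_const.sub (hVmeasj j))).aestronglyMeasurable ?_
    filter_upwards [hVj01 j] with ω hω
    rw [Real.norm_eq_abs, abs_of_nonneg (by nlinarith [hω.1, hω.2])]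
    nlinarith [hω.1, hω.2]
  -- copies have the right means and are integrable
  have hP1int : ∀ j : Fin b, Integrable (fun ω => (Pc j ω).1) μ := by
    intro j
    have h1 : Integrable (fun p : ℝ × ℝ => p.1) (μ.map (Pc j)) := by
      rw [hPc j]
      rw [integrable_map_measure measurable_fst.aestronglyMeasurable
        (hWmeas.prodMk hXmeas).aemeasurable]
      exact hWint
    have := (integrable_map_measure measurable_fst.aestronglyMeasurable
      (hPcmeas j).aemeasurable).mp h1
    exact this
  have hP2int : ∀ j : Fin b, Integrable (fun ω => (Pc j ω).2) μ := by
    intro j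
    have h1 : Integrable (fun p : ℝ × ℝ => p.2) (μ.map (Pc j)) := by
      rw [hPc j]
      rw [integrable_map_measure measurable_snd.aestronglyMeasurable
        (hWmeas.prodMk hXmeas).aemeasurable]
      exact hXint
    exact (integrable_map_measure measurable_snd.aestronglyMeasurable
      (hPcmeas j).aemeasurable).mp h1
  have hP1mean : ∀ j : Fin b, ∫ ω, (Pc j ω).1 ∂μ = 0 := by
    intro j
    have h1 : ∫ ω, (Pc j ω).1 ∂μ = ∫ p : ℝ × ℝ, p.1 ∂(μ.map (Pc j)) :=
      (integral_map (hPcmeas j).aemeasurable measurable_fst.aestronglyMeasurable).symm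
    rw [h1, hPc j, integral_map (hWmeas.prodMk hXmeas).aemeasurable
      measurable_fst.aestronglyMeasurable]
    exact hWmean
  have hP2mean : ∀ j : Fin b, ∫ ω, (Pc j ω).2 ∂μ = 0 := by
    intro j
    have h1 : ∫ ω, (Pc j ω).2 ∂μ = ∫ p : ℝ × ℝ, p.2 ∂(μ.map (Pc j)) :=
      (integral_map (hPcmeas j).aemeasurable measurable_snd.aestronglyMeasurable).symm
    rw [h1, hPc j, integral_map (hWmeas.prodMk hXmeas).aemeasurable
      measurable_snd.aestronglyMeasurable]
    exact hXmean
  -- products have mean zero by independence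
  have hmul1 : ∀ j : Fin b, ∫ ω, V ω j ^ 2 * (Pc j ω).1 ∂μ = 0 := by
    intro j
    have hind : IndepFun (fun ω => V ω j ^ 2) (fun ω => (Pc j ω).1) μ :=
      hindepV.comp (φ := fun v : Fin b → ℝ => v j ^ 2)
        (ψ := fun p : Fin b → ℝ × ℝ => (p j).1)
        ((measurable_pi_apply j).pow_const 2)
        (measurable_fst.comp (measurable_pi_apply j))
    have h := hind.integral_fun_mul_eq_mul_integral (hV2int j).aestronglyMeasurable (hP1int j).aestronglyMeasurable
    have h2 : ∫ ω, V ω j ^ 2 * (Pc j ω).1 ∂μ =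
        (∫ ω, V ω j ^ 2 ∂μ) * ∫ ω, (Pc j ω).1 ∂μ := h
    rw [h2, hP1mean j, mul_zero]
  have hmul2 : ∀ j : Fin b, ∫ ω, V ω j * (1 - V ω j) * (Pc j ω).2 ∂μ = 0 := by
    intro j
    have hind : IndepFun (fun ω => V ω j * (1 - V ω j)) (fun ω => (Pc j ω).2) μ :=
      hindepV.comp (φ := fun v : Fin b → ℝ => v j * (1 - v j))
        (ψ := fun p : Fin b → ℝ × ℝ => (p j).2)
        ((measurable_pi_apply j).mul (measurable_const.sub (measurable_pi_apply j)))
        (measurable_snd.comp (measurable_pi_apply j))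
    have h2 : ∫ ω, V ω j * (1 - V ω j) * (Pc j ω).2 ∂μ =
        (∫ ω, V ω j * (1 - V ω j) ∂μ) * ∫ ω, (Pc j ω).2 ∂μ :=
      hind.integral_fun_mul_eq_mul_integral (hV1int j).aestronglyMeasurable (hP2int j).aestronglyMeasurable
    rw [h2, hP2mean j, mul_zero]
  -- the first coordinate of the RHS
  set F : Ω → ℝ := fun ω =>
    ∑ j, (V ω j ^ 2 * (Pc j ω).1 + V ω j * (1 - V ω j) * (Pc j ω).2)
      + Cfun (V ω) + c * (1 - ∑ j, V ω j ^ 2) - 1 with hF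
  have hFmeas : Measurable F := by
    apply Measurable.sub
    apply Measurable.add
    apply Measurable.add
    · exact Finset.measurable_sum _ (fun j _ =>
        (((hVmeasj j).pow_const 2).mul (measurable_fst.comp (hPcmeas j))).add
        (((hVmeasj j).mul (measurable_const.sub (hVmeasj j))).mul
          (measurable_snd.comp (hPcmeas j))))
    · exact hCmeas
    · exact measurable_const.mul (measurable_const.sub
        (Finset.measurable_sum _ (fun j _ => (hVmeasj j).pow_const 2)))
    · exact measurable_const
  have hGmeas : Measurable fun ω => ∑ j, V ω j * (Pc j ω).2 + Cfun (V ω) :=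
    (Finset.measurable_sum _ (fun j _ =>
      (hVmeasj j).mul (measurable_snd.comp (hPcmeas j)))).add hCmeas
  have hterm : ∀ j : Fin b, Integrable (fun ω =>
      V ω j ^ 2 * (Pc j ω).1 + V ω j * (1 - V ω j) * (Pc j ω).2) μ :=
    fun j => (hprod1 j).add (hprod2 j)
  have hsum1int : Integrable (fun ω =>
      ∑ j, (V ω j ^ 2 * (Pc j ω).1 + V ω j * (1 - V ω j) * (Pc j ω).2)) μ :=
    integrable_finset_sum _ (fun j _ => hterm j)
  have hcSint : Integrable (fun ω => c * (1 - ∑ j, V ω j ^ 2)) μ :=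
    ((integrable_const (1:ℝ)).sub hSint).const_mul c
  have hFint : Integrable F μ :=
    ((hsum1int.add hCint).add hcSint).sub (integrable_const 1)
  -- the expectation identity from heq
  have hWF : (0:ℝ) = ∫ ω, F ω ∂μ := by
    have h1 : ∫ ω, W ω ∂μ = ∫ p : ℝ × ℝ, p.1 ∂(μ.map fun ω => (W ω, X ω)) :=
      (integral_map (hWmeas.prodMk hXmeas).aemeasurable
        measurable_fst.aestronglyMeasurable).symm
    rw [← hWmean, h1, heq,
      integral_map (hFmeas.prodMk hGmeas).aemeasurable
        measurable_fst.aestronglyMeasurable]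
  have hI2 : Integrable (fun ω =>
      ∑ j, (V ω j ^ 2 * (Pc j ω).1 + V ω j * (1 - V ω j) * (Pc j ω).2)
        + Cfun (V ω)) μ := hsum1int.add hCint
  have hI3 : Integrable (fun ω =>
      ∑ j, (V ω j ^ 2 * (Pc j ω).1 + V ω j * (1 - V ω j) * (Pc j ω).2)
        + Cfun (V ω) + c * (1 - ∑ j, V ω j ^ 2)) μ := hI2.add hcSint
  have hInt1 : ∫ ω, F ω ∂μ = c * ∫ ω, (1 - ∑ j, V ω j ^ 2) ∂μ - 1 := by
    have e : ∫ ω, F ω ∂μ = ∫ ω,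
        (∑ j, (V ω j ^ 2 * (Pc j ω).1 + V ω j * (1 - V ω j) * (Pc j ω).2)
          + Cfun (V ω) + c * (1 - ∑ j, V ω j ^ 2) - 1) ∂μ := rfl
    have hz : ∑ j : Fin b, ∫ ω, (V ω j ^ 2 * (Pc j ω).1
        + V ω j * (1 - V ω j) * (Pc j ω).2) ∂μ = 0 := by
      refine Finset.sum_eq_zero fun j _ => ?_
      rw [integral_add (hprod1 j) (hprod2 j), hmul1 j, hmul2 j, add_zero]
    rw [e, integral_sub hI3 (integrable_const 1),
      integral_add hI2 hcSint, integral_add hsum1int hCint,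
      integral_finset_sum _ (fun j _ => hterm j),
      hz, hCmean, integral_const_mul, integral_const]
    simp
  have hpart1 : c * ∫ ω, (1 - ∑ j, V ω j ^ 2) ∂μ = 1 := by
    have := hWF
    rw [hInt1] at this
    linarith
  refine ⟨hpart1, ?_⟩
  -- the integral equals 1 - k
  have hSmean : ∫ ω, (∑ j, V ω j ^ 2) ∂μ = k := by
    rw [integral_congr_ae hconst, integral_const]
    simp
  have hk : c * (1 - k) = 1 := by
    have h2 : ∫ ω, (1 - ∑ j, V ω j ^ 2) ∂μ = 1 - k := by
      rw [integral_sub (integrable_const 1) hSint, hSmean, integral_const]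
      simp
    rw [← h2]; exact hpart1
  -- the RHS equals (g, g) a.e., where g is the 1-dim RHS
  set g : Ω → ℝ := fun ω => ∑ j, V ω j * Xc j ω + Cfun (V ω) with hg
  have hgmeas : Measurable g :=
    (Finset.measurable_sum _ (fun j _ => (hVmeasj j).mul (hXcmeas j))).add hCmeas
  have hae : (fun ω =>
      (∑ j, (V ω j ^ 2 * Xc j ω + V ω j * (1 - V ω j) * Xc j ω)
          + Cfun (V ω) + c * (1 - ∑ j, V ω j ^ 2) - 1,
        ∑ j, V ω j * Xc j ω + Cfun (V ω))) =ᵐ[μ] fun ω => (g ω, g ω) := by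
    filter_upwards [hconst] with ω hω
    have h1 : ∀ j ∈ Finset.univ, V ω j ^ 2 * Xc j ω + V ω j * (1 - V ω j) * Xc j ω
        = V ω j * Xc j ω := by intro j _; ring
    rw [Prod.mk.injEq]
    constructor
    · rw [Finset.sum_congr rfl h1, hω, hg]
      have : c * (1 - k) - 1 = 0 := by rw [hk]; ring
      simp only []
      linarith [this]
    · rfl
  rw [Measure.map_congr hae]
  have hdiag : Measurable fun x : ℝ => (x, x) := measurable_id.prodMk measurable_id
  calc (μ.map fun ω => (Xt ω, Xt ω))
      = (μ.map Xt).map (fun x => (x, x)) := (Measure.map_map hdiag hXtmeas).symm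
    _ = (μ.map g).map (fun x => (x, x)) := by rw [heq1]
    _ = μ.map fun ω => (g ω, g ω) := Measure.map_map hdiag hgmeas
end
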